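/- arXiv:1009.5695 — 5 statements merged into one kernel-verified Lean document; each statement's English description precedes it below -/
import Mathlib

section
/- Let $X$ be a Banach space with modulus of uniform smoothness $\rho_X(\tau) = \sup\{\frac{\|x+\tau y\|+\|x-\tau y\|}{2} - 1 : \|x\|=\|y\|=1\}$, and suppose $\rho_X(\tau) \le s\tau^2$ for all $\tau > 0$, where $s > 0$. Then for every $x, y \in X$ and every $q \ge 2$, $\frac{\|x+y\|^q + \|x-y\|^q}{2} \le \left(\|x\|^2 + 5(s+q)\|y\|^2\right)^{q/2}$. -/
open Real

lemma aux_exp_le (u : ℝ) (h0 : 0 ≤ u) (h2 : u ≤ 2) : Real.exp u ≤ 1 + 5 * u := by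
  have ha : (0:ℝ) ≤ 1 - u/2 := by linarith
  have hb : (0:ℝ) ≤ u/2 := by linarith
  have hab : (1 - u/2) + u/2 = 1 := by ring
  have hc := convexOn_exp.2 (Set.mem_univ (0:ℝ)) (Set.mem_univ (2:ℝ)) ha hb hab
  simp only [smul_eq_mul, mul_zero, zero_add, Real.exp_zero] at hc
  have he : Real.exp 2 ≤ 9 := by
    have h1 : Real.exp 1 ≤ 2.7182818286 := (Real.exp_one_lt_d9).le
    have h2' : Real.exp 2 = Real.exp 1 * Real.exp 1 := by
      rw [← Real.exp_add]; norm_num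
    nlinarith [Real.exp_pos 1]
  have huu : u / 2 * 2 = u := by ring
  rw [huu] at hc
  nlinarith [Real.exp_pos 2]

lemma aux_key (q t : ℝ) (hq : 2 ≤ q) (ht0 : 0 ≤ t) (ht1 : t ≤ 1) :
    ((1+t)^q + (1-t)^q)/2 ≤ (1 + 5*q*t^2)^(q/2) := by
  have hq0 : (0:ℝ) < q := by linarith
  have hbase : (0:ℝ) ≤ 1 + 5*q*t^2 := by nlinarith
  by_cases hcase : q * t^2 ≤ 2
  · -- cosh route
    have h1 : (1+t)^q ≤ Real.exp (t*q) := by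
      calc (1+t)^q ≤ (Real.exp t)^q :=
            Real.rpow_le_rpow (by linarith) (by linarith [Real.add_one_le_exp t]) hq0.le
        _ = Real.exp (t*q) := (Real.exp_mul t q).symm
    have h2 : (1-t)^q ≤ Real.exp (-(t*q)) := by
      calc (1-t)^q ≤ (Real.exp (-t))^q :=
            Real.rpow_le_rpow (by linarith) (by linarith [Real.add_one_le_exp (-t)]) hq0.le
        _ = Real.exp (-t*q) := (Real.exp_mul (-t) q).symm
        _ = Real.exp (-(t*q)) := by ring_nf
    have hcosh : Real.cosh (t*q) ≤ Real.exp ((t*q)^2/2) := Real.cosh_le_exp_half_sq _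
    rw [Real.cosh_eq] at hcosh
    have h3 : ((1+t)^q + (1-t)^q)/2 ≤ Real.exp ((t*q)^2/2) := by
      have := add_le_add h1 h2
      calc ((1+t)^q + (1-t)^q)/2 ≤ (Real.exp (t*q) + Real.exp (-(t*q)))/2 := by linarith
        _ ≤ Real.exp ((t*q)^2/2) := hcosh
    have h4 : Real.exp ((t*q)^2/2) = (Real.exp (q*t^2))^(q/2) := by
      rw [← Real.exp_mul]; ring_nf
    have h5 : (Real.exp (q*t^2))^(q/2) ≤ (1 + 5*q*t^2)^(q/2) := by
      apply Real.rpow_le_rpow (Real.exp_pos _).le _ (by linarith)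
      have := aux_exp_le (q*t^2) (by positivity) hcase
      linarith
    calc ((1+t)^q + (1-t)^q)/2 ≤ Real.exp ((t*q)^2/2) := h3
      _ = (Real.exp (q*t^2))^(q/2) := h4
      _ ≤ (1 + 5*q*t^2)^(q/2) := h5
  · -- crude route: qt² ≥ 2
    push_neg at hcase
    have h1 : (1-t)^q ≤ (1+t)^q := Real.rpow_le_rpow (by linarith) (by linarith) hq0.le
    have h2 : ((1+t)^q + (1-t)^q)/2 ≤ (1+t)^q := by linarith
    have h3 : (1+t)^q = ((1+t)^2)^(q/2) := by
      rw [← Real.rpow_natCast (1+t) 2, ← Real.rpow_mul (by linarith)]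
      congr 1; ring
    have h4 : ((1+t)^2:ℝ) ≤ 1 + 5*q*t^2 := by nlinarith
    calc ((1+t)^q + (1-t)^q)/2 ≤ (1+t)^q := h2
      _ = ((1+t)^2)^(q/2) := h3
      _ ≤ (1 + 5*q*t^2)^(q/2) := Real.rpow_le_rpow (by positivity) h4 (by linarith)

lemma aux_two_point' (q a b : ℝ) (hq : 2 ≤ q) (hb : 0 ≤ b) (hba : b ≤ a) :
    (a^q + b^q)/2 ≤ (((a+b)/2)^2 + 5*q*((a-b)/2)^2)^(q/2) := by
  have hq0 : (0:ℝ) < q := by linarith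
  have ha : 0 ≤ a := le_trans hb hba
  rcases eq_or_lt_of_le (add_nonneg ha hb) with h0 | hab
  · have ha0 : a = 0 := by linarith
    have hb0 : b = 0 := by linarith
    rw [ha0, hb0]
    rw [Real.zero_rpow hq0.ne']
    norm_num
    positivity
  · set c := (a+b)/2 with hc
    set t := (a-b)/(a+b) with ht
    have hc0 : 0 < c := by simp only [hc]; linarith
    have ht0 : 0 ≤ t := div_nonneg (by linarith) (by linarith)
    have ht1 : t ≤ 1 := by
      rw [div_le_one (by linarith)]; linarith
    have hat : a = c * (1+t) := by
      simp only [hc, ht]; field_simp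
      ring
    have hbt : b = c * (1-t) := by
      simp only [hc, ht]; field_simp
      ring
    have haq : a^q = c^q * (1+t)^q := by
      rw [hat, Real.mul_rpow hc0.le (by linarith)]
    have hbq : b^q = c^q * (1-t)^q := by
      rw [hbt, Real.mul_rpow hc0.le (by linarith)]
    have hcq : (0:ℝ) ≤ c^q := Real.rpow_nonneg hc0.le q
    have key := aux_key q t hq ht0 ht1
    have hmul := mul_le_mul_of_nonneg_left key hcq
    have hrw : c^q * (1 + 5*q*t^2)^(q/2) = (c^2 + 5*q*(c*t)^2)^(q/2) := by
      have h1 : c^q = (c^2)^(q/2) := by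
        rw [← Real.rpow_natCast c 2, ← Real.rpow_mul hc0.le]
        congr 1; ring
      rw [h1, ← Real.mul_rpow (by positivity) (by nlinarith)]
      congr 1; ring
    have hct : c * t = (a-b)/2 := by
      simp only [hc, ht]; field_simp
    calc (a^q + b^q)/2 = c^q * (((1+t)^q + (1-t)^q)/2) := by rw [haq, hbq]; ring
      _ ≤ c^q * (1 + 5*q*t^2)^(q/2) := hmul
      _ = (c^2 + 5*q*(c*t)^2)^(q/2) := hrw
      _ = (((a+b)/2)^2 + 5*q*((a-b)/2)^2)^(q/2) := by rw [hct]

lemma aux_two_point (q a b : ℝ) (hq : 2 ≤ q) (ha : 0 ≤ a) (hb : 0 ≤ b) :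
    (a^q + b^q)/2 ≤ (((a+b)/2)^2 + 5*q*((a-b)/2)^2)^(q/2) := by
  rcases le_total b a with h | h
  · exact aux_two_point' q a b hq hb h
  · have := aux_two_point' q b a hq ha h
    have e1 : ((b+a)/2)^2 = ((a+b)/2)^2 := by ring
    have e2 : ((b-a)/2)^2 = ((a-b)/2)^2 := by ring
    rw [e1, e2] at this
    linarith

lemma aux_arith (s q a b nx ny : ℝ) (hs : 0 < s) (hq : 2 ≤ q) (ha : 0 ≤ a) (hb : 0 ≤ b)
    (hnx : 0 < nx) (hny : 0 ≤ ny) (hxy : s*ny^2 ≤ nx^2)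
    (hcc : (a+b)*nx ≤ 2*(nx^2 + s*ny^2)) (hdd : |a-b| ≤ 2*ny) :
    ((a+b)/2)^2 + 5*q*((a-b)/2)^2 ≤ nx^2 + 5*(s+q)*ny^2 := by
  have hd2 : (a-b)^2 ≤ 4*ny^2 := by
    have h1 : |a-b|^2 ≤ (2*ny)^2 := pow_le_pow_left₀ (abs_nonneg _) hdd 2
    rw [sq_abs] at h1
    nlinarith
  have hc2 : ((a+b)/2)^2 ≤ nx^2 + 3*s*ny^2 := by
    have h1 : ((a+b)*nx)^2 ≤ (2*(nx^2+s*ny^2))^2 := by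
      nlinarith [mul_nonneg (add_nonneg ha hb) hnx.le,
        mul_pos hs (mul_pos hnx hnx)]
    have h2 : (2*(nx^2+s*ny^2))^2 ≤ 4*(nx^2+3*s*ny^2)*nx^2 := by
      nlinarith [mul_nonneg (mul_nonneg hs.le (sq_nonneg ny)) (sub_nonneg.mpr hxy)]
    nlinarith [mul_pos hnx hnx]
  have h3 : 0 ≤ q * (4*ny^2 - (a-b)^2) :=
    mul_nonneg (by linarith) (by linarith)
  have h4 : 0 ≤ s * ny^2 := mul_nonneg hs.le (sq_nonneg ny)
  nlinarith

theorem stmt3 {X : Type*} [NormedAddCommGroup X] [NormedSpace ℝ X]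
    (s : ℝ) (hs : 0 < s)
    (hρ : ∀ τ : ℝ, 0 < τ → ∀ x y : X, ‖x‖ = 1 → ‖y‖ = 1 →
      (‖x + τ • y‖ + ‖x - τ • y‖) / 2 - 1 ≤ s * τ ^ 2)
    (q : ℝ) (hq : 2 ≤ q) (x y : X) :
    (‖x + y‖ ^ q + ‖x - y‖ ^ q) / 2 ≤ (‖x‖ ^ 2 + 5 * (s + q) * ‖y‖ ^ 2) ^ (q / 2) := by
  have hq0 : (0:ℝ) < q := by linarith
  have hxq : ‖x‖ ^ q = (‖x‖^2)^(q/2) := by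
    rw [← Real.rpow_natCast ‖x‖ 2, ← Real.rpow_mul (norm_nonneg x)]
    congr 1; push_cast; ring
  by_cases hy : y = 0
  · subst hy
    simp only [add_zero, sub_zero, norm_zero]
    have h0 : ((0:ℝ))^2 = 0 := by norm_num
    rw [h0, mul_zero, add_zero, ← hxq, add_self_div_two]
  · have hy0 : 0 < ‖y‖ := norm_pos_iff.mpr hy
    by_cases hxy : ‖x‖^2 < s * ‖y‖^2
    · have ha : ‖x + y‖ ≤ ‖x‖ + ‖y‖ := norm_add_le x y
      have hb : ‖x - y‖ ≤ ‖x‖ + ‖y‖ := norm_sub_le x y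
      have h1 : ‖x + y‖^q ≤ (‖x‖+‖y‖)^q := Real.rpow_le_rpow (norm_nonneg _) ha hq0.le
      have h2 : ‖x - y‖^q ≤ (‖x‖+‖y‖)^q := Real.rpow_le_rpow (norm_nonneg _) hb hq0.le
      have h3 : (‖x‖+‖y‖)^q = ((‖x‖+‖y‖)^2)^(q/2) := by
        rw [← Real.rpow_natCast (‖x‖+‖y‖) 2, ← Real.rpow_mul (by positivity)]
        congr 1; push_cast; ring
      have h4 : (‖x‖+‖y‖)^2 ≤ ‖x‖^2 + 5*(s+q)*‖y‖^2 := by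
        nlinarith [sq_nonneg (‖x‖ - ‖y‖), sq_nonneg ‖y‖, norm_nonneg x, norm_nonneg y]
      calc (‖x + y‖ ^ q + ‖x - y‖ ^ q) / 2 ≤ (‖x‖+‖y‖)^q := by linarith
        _ = ((‖x‖+‖y‖)^2)^(q/2) := h3
        _ ≤ (‖x‖ ^ 2 + 5 * (s + q) * ‖y‖ ^ 2) ^ (q / 2) :=
            Real.rpow_le_rpow (by positivity) h4 (by linarith)
    · push_neg at hxy
      have hx2 : 0 < ‖x‖^2 := lt_of_lt_of_le (mul_pos hs (pow_pos hy0 2)) hxy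
      have hx0 : 0 < ‖x‖ := by nlinarith [norm_nonneg x]
      have hxne : ‖x‖ ≠ 0 := hx0.ne'
      have hyne : ‖y‖ ≠ 0 := hy0.ne'
      have hτ : 0 < ‖y‖/‖x‖ := by positivity
      have hux : ‖(‖x‖⁻¹ • x)‖ = 1 := norm_smul_inv_norm (by simpa using hxne)
      have huy : ‖(‖y‖⁻¹ • y)‖ = 1 := norm_smul_inv_norm hy
      have H := hρ (‖y‖/‖x‖) hτ (‖x‖⁻¹ • x) (‖y‖⁻¹ • y) hux huy
      have hτv : (‖y‖/‖x‖) • (‖y‖⁻¹ • y) = ‖x‖⁻¹ • y := by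
        rw [smul_smul]; congr 1; field_simp
      have e1 : ‖x‖⁻¹ • x + (‖y‖/‖x‖) • (‖y‖⁻¹ • y) = ‖x‖⁻¹ • (x+y) := by
        rw [hτv, smul_add]
      have e2 : ‖x‖⁻¹ • x - (‖y‖/‖x‖) • (‖y‖⁻¹ • y) = ‖x‖⁻¹ • (x-y) := by
        rw [hτv, smul_sub]
      rw [e1, e2, norm_smul, norm_smul] at H
      simp only [norm_inv, Real.norm_eq_abs, abs_of_pos hx0] at H
      rw [div_pow] at H
      have hcc : (‖x+y‖ + ‖x-y‖) * ‖x‖ ≤ 2*(‖x‖^2 + s*‖y‖^2) := by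
        have Hm := mul_le_mul_of_nonneg_left H hx2.le
        have h5a : ‖x‖^2*(‖x‖⁻¹*‖x+y‖) = ‖x‖*‖x+y‖ := by
          field_simp
        have h5b : ‖x‖^2*(‖x‖⁻¹*‖x-y‖) = ‖x‖*‖x-y‖ := by
          field_simp
        have hr : ‖x‖^2 * (s * (‖y‖^2/‖x‖^2)) = s*‖y‖^2 := by
          field_simp
        linarith [Hm, h5a, h5b, hr]
      have hdd : |‖x+y‖ - ‖x-y‖| ≤ 2 * ‖y‖ := by
        have h5 := abs_norm_sub_norm_le (x+y) (x-y)
        have he : (x+y) - (x-y) = y + y := by abel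
        rw [he] at h5
        calc |‖x+y‖ - ‖x-y‖| ≤ ‖y + y‖ := h5
          _ ≤ ‖y‖ + ‖y‖ := norm_add_le y y
          _ = 2 * ‖y‖ := by ring
      have htp := aux_two_point q ‖x+y‖ ‖x-y‖ hq (norm_nonneg _) (norm_nonneg _)
      have hfin := aux_arith s q ‖x+y‖ ‖x-y‖ ‖x‖ ‖y‖ hs hq (norm_nonneg _)
        (norm_nonneg _) hx0 (norm_nonneg _) hxy hcc hdd
      calc (‖x + y‖ ^ q + ‖x - y‖ ^ q) / 2
          ≤ (((‖x+y‖+‖x-y‖)/2)^2 + 5*q*((‖x+y‖-‖x-y‖)/2)^2)^(q/2) := htp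
        _ ≤ (‖x‖ ^ 2 + 5 * (s + q) * ‖y‖ ^ 2) ^ (q / 2) :=
            Real.rpow_le_rpow (by positivity) hfin (by linarith)
end

section
/- Let $X$ be a Banach space with $\rho_X(\tau) \le s\tau^2$ for all $\tau > 0$, let $q \ge 2$, and let $(\Omega, \mu)$ be a measure space. Then the Bochner space $L_q(X, \Omega, \mu)$ satisfies $\rho_{L_q(X,\Omega,\mu)}(\tau) \le 4(s+q)\tau^2$ for every $\tau > 0$. -/
open MeasureTheory
open Real
open scoped ENNReal


lemma coshBound {x : ℝ} (hx0 : 0 ≤ x) (hx : x ≤ 1/2) :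
    Real.exp x + Real.exp (-x) ≤ 2 + 2 * x ^ 2 := by
  have hE : (0:ℝ) < Real.exp x := Real.exp_pos x
  have hEn : Real.exp (-x) = (Real.exp x)⁻¹ := Real.exp_neg x
  have hinv : Real.exp x * (Real.exp x)⁻¹ = 1 := mul_inv_cancel₀ hE.ne'
  have hge : 1 ≤ Real.exp x := Real.one_le_exp hx0
  have h1 : (1 - x) * Real.exp x ≤ 1 := by
    have h0 := Real.add_one_le_exp (-x)
    have h2 : (-x + 1) * Real.exp x ≤ Real.exp (-x) * Real.exp x :=
      mul_le_mul_of_nonneg_right h0 hE.le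
    rw [← Real.exp_add, neg_add_cancel, Real.exp_zero] at h2
    nlinarith [h2]
  have hE2 : Real.exp x ≤ 2 := by
    have h3 : Real.exp x ≤ Real.exp (1/2) := Real.exp_le_exp.2 hx
    have h4 : Real.exp (1/2) ^ 2 = Real.exp 1 := by
      rw [← Real.exp_nat_mul]; norm_num
    have h5 := Real.exp_one_lt_d9
    nlinarith [Real.exp_pos (1/2)]
  have h6 : Real.exp x - 1 ≤ x * Real.exp x := by nlinarith
  have h7 : (Real.exp x - 1)^2 ≤ (x * Real.exp x)^2 :=
    pow_le_pow_left₀ (by linarith) h6 2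
  have h8 : Real.exp x ^ 2 + 1 ≤ (2 + 2*x^2) * Real.exp x := by
    nlinarith [mul_nonneg (mul_nonneg (sq_nonneg x) hE.le) (by linarith : (0:ℝ) ≤ 2 - Real.exp x)]
  have h9 : Real.exp x * (Real.exp x + (Real.exp x)⁻¹) = Real.exp x ^2 + 1 := by
    field_simp
  rw [hEn]
  nlinarith [h8, h9, hE]



lemma twoPoint {q m d : ℝ} (hq : 2 ≤ q) (hd : 0 ≤ d) (hdm : d ≤ m) :
    ((m+d) ^ q + (m-d) ^ q) / 2 ≤ (m^2 + (8*q-2)*d^2) ^ (q/2) := by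
  have hm : 0 ≤ m := le_trans hd hdm
  have hq0 : (0:ℝ) < q := by linarith
  have hq2 : (1:ℝ) ≤ q/2 := by linarith
  by_cases hbig : m ≤ 2*q*d
  · have h1 : (m-d)^q ≤ (m+d)^q :=
      Real.rpow_le_rpow (by linarith) (by linarith) hq0.le
    have h2 : (m+d)^q = ((m+d)^2)^(q/2) := by
      rw [← Real.rpow_natCast (m+d) 2, ← Real.rpow_mul (by linarith)]
      congr 1
      push_cast; ring
    have h3 : (m+d)^2 ≤ m^2 + (8*q-2)*d^2 := by nlinarith
    have h4 : ((m+d)^2)^(q/2) ≤ (m^2 + (8*q-2)*d^2)^(q/2) :=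
      Real.rpow_le_rpow (sq_nonneg _) h3 (by linarith)
    calc ((m+d) ^ q + (m-d) ^ q) / 2 ≤ (m+d)^q := by linarith
      _ = ((m+d)^2)^(q/2) := h2
      _ ≤ _ := h4
  · push_neg at hbig
    have hm0 : 0 < m := lt_of_le_of_lt (by positivity) hbig
    set t : ℝ := d/m with ht
    have ht0 : 0 ≤ t := div_nonneg hd hm0.le
    have hx : q*t ≤ 1/2 := by
      rw [ht, mul_div_assoc' q d m, div_le_iff₀ hm0]
      linarith
    have hexp : ∀ u : ℝ, Real.exp u ^ q = Real.exp (u * q) := by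
      intro u
      rw [Real.rpow_def_of_pos (Real.exp_pos u), Real.log_exp]
    -- bound (m+d)^q
    have hplus : (m+d)^q ≤ m^q * Real.exp (q*t) := by
      have h5 : m + d = m * (1+t) := by rw [ht]; field_simp
      have h6 : m * (1+t) ≤ m * Real.exp t :=
        mul_le_mul_of_nonneg_left (by linarith [Real.add_one_le_exp t]) hm
      calc (m+d)^q ≤ (m * Real.exp t)^q := by
            rw [h5]; exact Real.rpow_le_rpow (by positivity) h6 hq0.le
        _ = m^q * Real.exp (q*t) := by
            rw [Real.mul_rpow hm (Real.exp_pos t).le, hexp t, mul_comm t q]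
    have hminus : (m-d)^q ≤ m^q * Real.exp (-(q*t)) := by
      have h5 : m - d = m * (1-t) := by rw [ht]; field_simp
      have h6 : m * (1-t) ≤ m * Real.exp (-t) :=
        mul_le_mul_of_nonneg_left (by linarith [Real.add_one_le_exp (-t)]) hm
      calc (m-d)^q ≤ (m * Real.exp (-t))^q := by
            rw [h5]; exact Real.rpow_le_rpow (by linarith) h6 hq0.le
        _ = m^q * Real.exp (-(q*t)) := by
            rw [Real.mul_rpow hm (Real.exp_pos (-t)).le, hexp (-t)]
            ring_nf
    have hcosh := coshBound (by positivity) hx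
    have hmq : (0:ℝ) ≤ m^q := Real.rpow_nonneg hm q
    have hLHS : ((m+d) ^ q + (m-d) ^ q) / 2 ≤ m^q * (1 + (q*t)^2) := by
      have := mul_le_mul_of_nonneg_left hcosh hmq
      nlinarith
    -- RHS
    have hdt : d = t * m := by rw [ht]; field_simp
    have hRHS : (m^2 + (8*q-2)*d^2) ^ (q/2) = m^q * (1 + (8*q-2)*t^2)^(q/2) := by
      have h7 : m^2 + (8*q-2)*d^2 = m^2 * (1 + (8*q-2)*t^2) := by rw [hdt]; ring
      rw [h7, Real.mul_rpow (sq_nonneg m) (by nlinarith)]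
      congr 1
      rw [← Real.rpow_natCast m 2, ← Real.rpow_mul hm]
      congr 1
      push_cast; ring
    have hBer : 1 + (q/2) * ((8*q-2)*t^2) ≤ (1 + (8*q-2)*t^2)^(q/2) :=
      one_add_mul_self_le_rpow_one_add (by nlinarith) hq2
    have hfin : 1 + (q*t)^2 ≤ 1 + (q/2) * ((8*q-2)*t^2) := by nlinarith
    calc ((m+d) ^ q + (m-d) ^ q) / 2 ≤ m^q * (1 + (q*t)^2) := hLHS
      _ ≤ m^q * (1 + (8*q-2)*t^2)^(q/2) := by
          apply mul_le_mul_of_nonneg_left _ hmq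
          exact le_trans hfin hBer
      _ = _ := hRHS.symm


section Helper
variable {X : Type*} [NormedAddCommGroup X] [NormedSpace ℝ X]

lemma smooth_homog {s : ℝ}
    (hρ : ∀ τ : ℝ, 0 < τ → ∀ x y : X, ‖x‖ = 1 → ‖y‖ = 1 →
      (‖x + τ • y‖ + ‖x - τ • y‖) / 2 - 1 ≤ s * τ ^ 2)
    (x y : X) (hx : x ≠ 0) (hy : y ≠ 0) :
    (‖x + y‖ + ‖x - y‖) / 2 ≤ ‖x‖ + s * ‖y‖^2 / ‖x‖ := by
  have hu : (0:ℝ) < ‖x‖ := norm_pos_iff.2 hx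
  have hv : (0:ℝ) < ‖y‖ := norm_pos_iff.2 hy
  have hτ : (0:ℝ) < ‖y‖/‖x‖ := div_pos hv hu
  have ha : ‖(‖x‖⁻¹ • x : X)‖ = 1 := norm_smul_inv_norm hx
  have hb : ‖(‖y‖⁻¹ • y : X)‖ = 1 := norm_smul_inv_norm hy
  have key := hρ (‖y‖/‖x‖) hτ (‖x‖⁻¹ • x) (‖y‖⁻¹ • y) ha hb
  have hsm : (‖y‖/‖x‖) • (‖y‖⁻¹ • y) = ‖x‖⁻¹ • y := by
    rw [smul_smul]
    congr 1
    field_simp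
  rw [hsm, ← smul_add, ← smul_sub] at key
  rw [norm_smul, norm_smul, Real.norm_eq_abs, abs_of_pos (by positivity : (0:ℝ) < ‖x‖⁻¹)] at key
  have h2 : (‖y‖/‖x‖)^2 = ‖y‖^2/‖x‖^2 := by rw [div_pow]
  rw [h2] at key
  have := mul_le_mul_of_nonneg_left (sub_le_iff_le_add.1 key) hu.le
  calc (‖x + y‖ + ‖x - y‖) / 2
      = ‖x‖ * ((‖x‖⁻¹ * ‖x + y‖ + ‖x‖⁻¹ * ‖x - y‖) / 2) := by
        field_simp
    _ ≤ ‖x‖ * (s * (‖y‖^2/‖x‖^2) + 1) := this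
    _ = ‖x‖ + s * ‖y‖^2 / ‖x‖ := by field_simp; ring


lemma pointwiseX {s q : ℝ} (hs : 0 < s) (hq : 2 ≤ q)
    (hρ : ∀ τ : ℝ, 0 < τ → ∀ x y : X, ‖x‖ = 1 → ‖y‖ = 1 →
      (‖x + τ • y‖ + ‖x - τ • y‖) / 2 - 1 ≤ s * τ ^ 2)
    (τ : ℝ) (hτ : 0 < τ) (x y : X) :
    ‖x + τ • y‖ ^ q + ‖x - τ • y‖ ^ q
      ≤ 2 * (‖x‖^2 + (4*s+8*q-1) * (τ * ‖y‖)^2) ^ (q/2) := by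
  have hq0 : (0:ℝ) < q := by linarith
  by_cases hy : y = 0
  · subst hy
    simp only [smul_zero, add_zero, sub_zero, norm_zero, mul_zero]
    have h1 : ‖x‖ ^ q = (‖x‖^2) ^ (q/2) := by
      rw [← Real.rpow_natCast ‖x‖ 2, ← Real.rpow_mul (norm_nonneg x)]
      congr 1
      push_cast; ring
    have h2 : (4*s+8*q-1) * (0:ℝ)^2 = 0 := by ring
    rw [h2, add_zero, ← h1]
    linarith [Real.rpow_nonneg (norm_nonneg x) q]
  · set z : X := τ • y with hz
    have hz0 : z ≠ 0 := smul_ne_zero hτ.ne' hy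
    have hw : ‖z‖ = τ * ‖y‖ := by
      rw [hz, norm_smul, Real.norm_eq_abs, abs_of_pos hτ]
    have hwpos : 0 < ‖z‖ := norm_pos_iff.2 hz0
    set a : ℝ := ‖x + z‖ with hadef
    set b : ℝ := ‖x - z‖ with hbdef
    set m : ℝ := (a+b)/2 with hm
    set dd : ℝ := |a-b|/2 with hdd
    clear_value z a b m dd
    have ha0 : 0 ≤ a := by rw [hadef]; exact norm_nonneg _
    have hb0 : 0 ≤ b := by rw [hbdef]; exact norm_nonneg _
    have hdd0 : 0 ≤ dd := by rw [hdd]; positivity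
    have hddm : dd ≤ m := by
      rw [hdd, hm]
      have : |a - b| ≤ a + b := by
        rw [abs_sub_le_iff]; constructor <;> linarith
      linarith
    have hddw : dd ≤ ‖z‖ := by
      have h2 : |a - b| ≤ ‖(x+z) - (x-z)‖ := by
        rw [hadef, hbdef]; exact abs_norm_sub_norm_le _ _
      have h3 : (x+z) - (x-z) = z + z := by abel
      have h4 : ‖z + z‖ ≤ ‖z‖ + ‖z‖ := norm_add_le _ _
      rw [h3] at h2
      rw [hdd]
      linarith
    -- bound on m
    have hm2 : m^2 ≤ ‖x‖^2 + (4*s+1) * ‖z‖^2 := by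
      by_cases hcase : 2*s*‖z‖ ≤ ‖x‖
      · have hu0 : (0:ℝ) < ‖x‖ := lt_of_lt_of_le (by positivity) hcase
        have hx0 : x ≠ 0 := norm_pos_iff.1 hu0
        have hhom := smooth_homog hρ x z hx0 hz0
        set r : ℝ := s * ‖z‖^2 / ‖x‖ with hr
        have hr0 : 0 ≤ r := by positivity
        have hru : ‖x‖ * r = s * ‖z‖^2 := by rw [hr]; field_simp
        have hr1 : r ≤ ‖z‖/2 := by
          rw [hr, div_le_div_iff₀ hu0 (by norm_num : (0:ℝ) < 2)]
          nlinarith [mul_le_mul_of_nonneg_right hcase hwpos.le]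
        have hmr : m ≤ ‖x‖ + r := by rw [hm, hadef, hbdef, hr]; exact hhom
        nlinarith [sq_nonneg m, sq_nonneg r, hwpos]
      · push_neg at hcase
        have hma : m ≤ ‖x‖ + ‖z‖ := by
          have h5 : a ≤ ‖x‖ + ‖z‖ := by rw [hadef]; exact norm_add_le x z
          have h6 : b ≤ ‖x‖ + ‖z‖ := by rw [hbdef]; exact norm_sub_le x z
          rw [hm]; linarith
        have hm0 : 0 ≤ m := by rw [hm]; linarith
        nlinarith [norm_nonneg x, hwpos, hs]
    have hdd2 : dd^2 ≤ ‖z‖^2 := by nlinarith [hddw, hdd0]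
    have hkey : m^2 + (8*q-2)*dd^2 ≤ ‖x‖^2 + (4*s+8*q-1) * ‖z‖^2 := by
      nlinarith [hdd2, hq, hwpos]
    have htp := twoPoint hq hdd0 hddm
    have hmono : (m^2 + (8*q-2)*dd^2) ^ (q/2)
        ≤ (‖x‖^2 + (4*s+8*q-1) * ‖z‖^2) ^ (q/2) :=
      Real.rpow_le_rpow (by nlinarith [sq_nonneg m, sq_nonneg dd]) hkey (by positivity)
    have hab : (m+dd)^q + (m-dd)^q = a^q + b^q := by
      rcases le_total b a with h | h
      · have e1 : m + dd = a := by rw [hm, hdd, abs_of_nonneg (by linarith)]; ring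
        have e2 : m - dd = b := by rw [hm, hdd, abs_of_nonneg (by linarith)]; ring
        rw [e1, e2]
      · have e1 : m + dd = b := by rw [hm, hdd, abs_of_nonpos (by linarith)]; ring
        have e2 : m - dd = a := by rw [hm, hdd, abs_of_nonpos (by linarith)]; ring
        rw [e1, e2, add_comm]
    rw [← hw, ← hab]
    linarith [htp, hmono]

end Helper

theorem stmt4 {X : Type*} [NormedAddCommGroup X] [NormedSpace ℝ X]
    {Ω : Type*} [MeasurableSpace Ω] (μ : Measure Ω)
    (s q : ℝ) (hs : 0 < s) (hq : 2 ≤ q) [Fact (1 ≤ ENNReal.ofReal q)]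
    (hρ : ∀ τ : ℝ, 0 < τ → ∀ x y : X, ‖x‖ = 1 → ‖y‖ = 1 →
      (‖x + τ • y‖ + ‖x - τ • y‖) / 2 - 1 ≤ s * τ ^ 2) :
    ∀ τ : ℝ, 0 < τ → ∀ f g : Lp X (ENNReal.ofReal q) μ, ‖f‖ = 1 → ‖g‖ = 1 →
      (‖f + τ • g‖ + ‖f - τ • g‖) / 2 - 1 ≤ 4 * (s + q) * τ ^ 2 := by
  have hq0 : (0:ℝ) < q := by linarith
  set p : ℝ≥0∞ := ENNReal.ofReal q with hp
  intro τ hτ f g hf hg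
  have hp0 : p ≠ 0 := by
    rw [hp, Ne, ENNReal.ofReal_eq_zero]; linarith
  have hpt : p ≠ ∞ := ENNReal.ofReal_ne_top
  have hpq : p.toReal = q := ENNReal.toReal_ofReal hq0.le
  set C : ℝ := 4*s+8*q-1 with hC
  have hC0 : 0 < C := by rw [hC]; linarith
  set c : ℝ≥0∞ := ENNReal.ofReal (C * τ^2) with hc
  have hct : c ≠ ∞ := ENNReal.ofReal_ne_top
  -- norms as lintegrals
  have hI : ∀ h : Lp X p μ,
      eLpNorm (⇑h) p μ = (∫⁻ ω, (‖h ω‖₊ : ℝ≥0∞) ^ q ∂μ) ^ (1/q) := by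
    intro h
    rw [eLpNorm_eq_lintegral_rpow_enorm_toReal hp0 hpt, hpq]; rfl
  have hIfin : ∀ h : Lp X p μ, (∫⁻ ω, (‖h ω‖₊ : ℝ≥0∞) ^ q ∂μ) ≠ ∞ := by
    intro h hcon
    have h1 := Lp.eLpNorm_ne_top h
    rw [hI h, hcon, ENNReal.top_rpow_of_pos (by positivity)] at h1
    exact h1 rfl
  have hnorm1 : ∀ h : Lp X p μ, ‖h‖ = 1 → (∫⁻ ω, (‖h ω‖₊ : ℝ≥0∞) ^ q ∂μ) = 1 := by
    intro h hh
    have h1 : eLpNorm (⇑h) p μ = 1 := by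
      rw [← ENNReal.ofReal_toReal (Lp.eLpNorm_ne_top h), ← Lp.norm_def, hh]
      simp
    have h3 : (∫⁻ ω, (‖h ω‖₊ : ℝ≥0∞) ^ q ∂μ)
        = ((∫⁻ ω, (‖h ω‖₊ : ℝ≥0∞) ^ q ∂μ) ^ (1/q)) ^ q := by
      rw [← ENNReal.rpow_mul, one_div, inv_mul_cancel₀ hq0.ne', ENNReal.rpow_one]
    rw [h3, ← hI h, h1, ENNReal.one_rpow]
  have hIf := hnorm1 f hf
  have hIg := hnorm1 g hg
  -- a.e. pointwise bound
  have hae : ∀ᵐ ω ∂μ, (‖(f + τ • g : Lp X p μ) ω‖₊ : ℝ≥0∞)^q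
        + (‖(f - τ • g : Lp X p μ) ω‖₊ : ℝ≥0∞)^q
      ≤ 2 * ((‖f ω‖₊ : ℝ≥0∞)^(2:ℕ) + c * (‖g ω‖₊ : ℝ≥0∞)^(2:ℕ)) ^ (q/2) := by
    filter_upwards [Lp.coeFn_add f (τ • g), Lp.coeFn_sub f (τ • g), Lp.coeFn_smul τ g]
      with ω e1 e2 e3
    rw [e1, e2, Pi.add_apply, Pi.sub_apply, e3, Pi.smul_apply]
    have key := pointwiseX hs hq hρ τ hτ (f ω) (g ω)
    have key2 : ‖f ω + τ • g ω‖ ^ q + ‖f ω - τ • g ω‖ ^ q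
        ≤ 2 * (‖f ω‖^2 + (C*τ^2) * ‖g ω‖^2) ^ (q/2) := by
      have e4 : ‖f ω‖^2 + (C*τ^2) * ‖g ω‖^2 = ‖f ω‖^2 + C * (τ * ‖g ω‖)^2 := by ring
      rw [e4]; exact key
    have e5 : ∀ z : X, (‖z‖₊ : ℝ≥0∞)^q = ENNReal.ofReal (‖z‖ ^ q) := by
      intro z
      rw [← enorm_eq_nnnorm, ← ofReal_norm_eq_enorm, ← ENNReal.ofReal_rpow_of_nonneg (norm_nonneg z) hq0.le]
    have e6 : ∀ z : X, (‖z‖₊ : ℝ≥0∞)^(2:ℕ) = ENNReal.ofReal (‖z‖ ^ 2) := by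
      intro z
      rw [← enorm_eq_nnnorm, ← ofReal_norm_eq_enorm, ← ENNReal.ofReal_pow (norm_nonneg z)]
    simp only [e5, e6]
    rw [← ENNReal.ofReal_add (by positivity) (by positivity), hc,
      ← ENNReal.ofReal_mul (by positivity : (0:ℝ) ≤ C * τ^2),
      ← ENNReal.ofReal_add (by positivity) (by positivity)]
    calc ENNReal.ofReal (‖f ω + τ • g ω‖ ^ q + ‖f ω - τ • g ω‖ ^ q)
        ≤ ENNReal.ofReal (2 * (‖f ω‖^2 + C*τ^2 * ‖g ω‖^2) ^ (q/2)) :=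
          ENNReal.ofReal_le_ofReal key2
      _ = 2 * ENNReal.ofReal ((‖f ω‖^2 + C*τ^2 * ‖g ω‖^2)) ^ (q/2) := by
          rw [ENNReal.ofReal_mul (by norm_num : (0:ℝ) ≤ 2),
            ENNReal.ofReal_rpow_of_nonneg (by positivity : (0:ℝ) ≤ ‖f ω‖^2 + C*τ^2 * ‖g ω‖^2)
              (by positivity : (0:ℝ) ≤ q/2)]
          norm_num
  -- integrate
  have hmeasq : ∀ h : Lp X p μ, AEMeasurable (fun ω => (‖h ω‖₊ : ℝ≥0∞)^q) μ :=
    fun h => (Lp.aestronglyMeasurable h).enorm.pow_const q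
  have hmW : AEMeasurable (fun ω => (‖f ω‖₊ : ℝ≥0∞)^(2:ℕ) + c * (‖g ω‖₊ : ℝ≥0∞)^(2:ℕ)) μ :=
    ((Lp.aestronglyMeasurable f).enorm.pow_const 2).add
      (((Lp.aestronglyMeasurable g).enorm.pow_const 2).const_mul c)
  have hint : (∫⁻ ω, (‖(f + τ • g : Lp X p μ) ω‖₊ : ℝ≥0∞)^q ∂μ)
        + (∫⁻ ω, (‖(f - τ • g : Lp X p μ) ω‖₊ : ℝ≥0∞)^q ∂μ)
      ≤ 2 * ∫⁻ ω, ((‖f ω‖₊ : ℝ≥0∞)^(2:ℕ) + c * (‖g ω‖₊ : ℝ≥0∞)^(2:ℕ)) ^ (q/2) ∂μ := by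
    rw [← lintegral_add_left' (hmeasq _), ← lintegral_const_mul'' 2 (hmW.pow_const _)]
    exact lintegral_mono_ae hae
  -- Minkowski step
  have hU2 : ∀ x : ℝ≥0∞, (x^(2:ℕ)) ^ (q/2) = x ^ q := by
    intro x
    rw [← ENNReal.rpow_natCast x 2, ← ENNReal.rpow_mul]
    congr 1
    push_cast; ring
  have hmink : (∫⁻ ω, ((‖f ω‖₊ : ℝ≥0∞)^(2:ℕ) + c * (‖g ω‖₊ : ℝ≥0∞)^(2:ℕ)) ^ (q/2) ∂μ)
      ≤ (1 + c) ^ (q/2) := by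
    have hU : AEMeasurable (fun ω => (‖f ω‖₊ : ℝ≥0∞)^(2:ℕ)) μ :=
      (Lp.aestronglyMeasurable f).enorm.pow_const 2
    have hV : AEMeasurable (fun ω => c * (‖g ω‖₊ : ℝ≥0∞)^(2:ℕ)) μ :=
      ((Lp.aestronglyMeasurable g).enorm.pow_const 2).const_mul c
    have h1 := ENNReal.lintegral_Lp_add_le hU hV (by linarith : (1:ℝ) ≤ q/2)
    have hUe : (∫⁻ ω, ((‖f ω‖₊ : ℝ≥0∞)^(2:ℕ)) ^ (q/2) ∂μ) = 1 := by
      simp_rw [hU2]; exact hIf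
    have hVe : (∫⁻ ω, (c * (‖g ω‖₊ : ℝ≥0∞)^(2:ℕ)) ^ (q/2) ∂μ) = c ^ (q/2) := by
      have e8 : ∀ x : ℝ≥0∞, (c * x^(2:ℕ)) ^ (q/2) = c^(q/2) * x ^ q := by
        intro x
        rw [ENNReal.mul_rpow_of_nonneg _ _ (by positivity : (0:ℝ) ≤ q/2), hU2]
      simp_rw [e8]
      rw [lintegral_const_mul'' _ (hmeasq g), hIg, mul_one]
    rw [hUe, hVe] at h1
    rw [ENNReal.one_rpow, ← ENNReal.rpow_mul] at h1
    have e7 : (q/2) * (1/(q/2)) = 1 := mul_one_div_cancel (by positivity : (0:ℝ) < q/2).ne'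
    rw [e7, ENNReal.rpow_one] at h1
    have h2 := ENNReal.rpow_le_rpow h1 (by positivity : (0:ℝ) ≤ q/2)
    rwa [← ENNReal.rpow_mul, one_div, inv_mul_cancel₀ (by positivity : (q/2:ℝ) ≠ 0),
      ENNReal.rpow_one] at h2
  have htotal : (∫⁻ ω, (‖(f + τ • g : Lp X p μ) ω‖₊ : ℝ≥0∞)^q ∂μ)
      + (∫⁻ ω, (‖(f - τ • g : Lp X p μ) ω‖₊ : ℝ≥0∞)^q ∂μ) ≤ 2 * (1 + c) ^ (q/2) :=
    le_trans hint (by gcongr)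
  -- mean step
  set z₁ : ℝ≥0∞ := eLpNorm (⇑(f + τ • g)) p μ with hz₁
  set z₂ : ℝ≥0∞ := eLpNorm (⇑(f - τ • g)) p μ with hz₂
  have hzq : ∀ h : Lp X p μ, (eLpNorm (⇑h) p μ) ^ q = ∫⁻ ω, (‖h ω‖₊ : ℝ≥0∞)^q ∂μ := by
    intro h
    rw [hI h, ← ENNReal.rpow_mul, one_div, inv_mul_cancel₀ hq0.ne', ENNReal.rpow_one]
  have hmean := ENNReal.rpow_arith_mean_le_arith_mean2_rpow (1/2) (1/2) z₁ z₂
    (ENNReal.add_halves 1) (by linarith : (1:ℝ) ≤ q)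
  have h3 : (1/2 : ℝ≥0∞) * z₁ ^ q + (1/2 : ℝ≥0∞) * z₂ ^ q ≤ (1+c)^(q/2) := by
    rw [hz₁, hz₂, hzq, hzq, ← mul_add]
    calc (1/2 : ℝ≥0∞) * _ ≤ (1/2 : ℝ≥0∞) * (2 * (1 + c) ^ (q/2)) :=
          mul_le_mul_right htotal _
      _ = (1+c)^(q/2) := by
          rw [← mul_assoc, one_div, ENNReal.inv_mul_cancel (by norm_num) (by norm_num), one_mul]
  have h4 : (1/2 : ℝ≥0∞)*z₁ + (1/2 : ℝ≥0∞)*z₂ ≤ ((1+c)^(q/2))^(1/q) := by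
    have h5 := ENNReal.rpow_le_rpow (le_trans hmean h3) (by positivity : (0:ℝ) ≤ 1/q)
    rwa [← ENNReal.rpow_mul, mul_one_div, div_self hq0.ne', ENNReal.rpow_one] at h5
  have h6 : ((1+c)^(q/2))^(1/q) = (1+c)^((1:ℝ)/2) := by
    rw [← ENNReal.rpow_mul]
    congr 1
    field_simp
  have hsum : z₁ + z₂ ≤ 2 * (1+c)^((1:ℝ)/2) := by
    calc z₁ + z₂ = 2 * ((1/2 : ℝ≥0∞)*z₁ + (1/2 : ℝ≥0∞)*z₂) := by
          rw [mul_add, ← mul_assoc, ← mul_assoc, one_div,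
            ENNReal.mul_inv_cancel (by norm_num) (by norm_num), one_mul, one_mul]
      _ ≤ 2 * ((1+c)^((1:ℝ)/2)) := by
          rw [← h6]
          exact mul_le_mul_right h4 2
  -- to real
  have h1ct : (1 + c) ≠ ∞ := ENNReal.add_ne_top.2 ⟨ENNReal.one_ne_top, hct⟩
  have hYt : (1+c)^((1:ℝ)/2) ≠ ∞ := ENNReal.rpow_ne_top_of_nonneg (by norm_num) h1ct
  have h8 := ENNReal.toReal_mono (by
      refine ENNReal.mul_ne_top (by norm_num) hYt) hsum
  rw [ENNReal.toReal_add (Lp.eLpNorm_ne_top _) (Lp.eLpNorm_ne_top _), ENNReal.toReal_mul,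
    ← ENNReal.toReal_rpow, ENNReal.toReal_add ENNReal.one_ne_top hct, ENNReal.toReal_one,
    hc, ENNReal.toReal_ofReal (by positivity : (0:ℝ) ≤ C * τ^2), ENNReal.toReal_ofNat] at h8
  rw [Lp.norm_def, Lp.norm_def]
  -- final real arithmetic
  have hu0 : (0:ℝ) ≤ C * τ^2 := by positivity
  have hsq : ((1:ℝ) + C * τ^2)^((1:ℝ)/2) ≤ 1 + (C * τ^2)/2 := by
    have h9' : ∀ u : ℝ, 0 ≤ u → (1:ℝ) + u ≤ (1 + u/2)^(2:ℕ) := by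
      intro u hu
      nlinarith [sq_nonneg u]
    have h9 : (1:ℝ) + C * τ^2 ≤ (1 + (C * τ^2)/2)^(2:ℕ) := h9' _ hu0
    calc ((1:ℝ) + C * τ^2)^((1:ℝ)/2) ≤ ((1 + (C * τ^2)/2)^(2:ℕ))^((1:ℝ)/2) :=
          Real.rpow_le_rpow (by positivity) h9 (by norm_num)
      _ = 1 + (C * τ^2)/2 := by
          rw [← Real.rpow_natCast (1 + (C * τ^2)/2) 2, ← Real.rpow_mul (by positivity)]
          norm_num
  have hCle : C * τ^2 / 2 ≤ 4 * (s + q) * τ ^ 2 := by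
    rw [hC]
    nlinarith [sq_nonneg τ, hs, hτ]
  linarith [h8, hsq, hCle]
end

section
/- Let $X$ be a Banach space with $\rho_X(\tau) \le s\tau^2$ for all $\tau > 0$. Let $x_1, x_2, \ldots \in X$ and set $S_n = x_1 + \cdots + x_n$. Assume that $\|S_n - x_{n+1}\| \ge \|S_n\|$ for all $n \in \mathbb{N}$. Then for every $n$, $\|S_n\|^2 \le 10(s+2)(\|x_1\|^2 + \cdots + \|x_n\|^2)$. -/
lemma key_step {X : Type*} [NormedAddCommGroup X] [NormedSpace ℝ X]
    (s : ℝ) (hs : 0 < s)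
    (hρ : ∀ τ : ℝ, 0 < τ → ∀ x y : X, ‖x‖ = 1 → ‖y‖ = 1 →
      (‖x + τ • y‖ + ‖x - τ • y‖) / 2 - 1 ≤ s * τ ^ 2)
    (a b : X) (hab : ‖a‖ ≤ ‖a - b‖) :
    ‖a + b‖ ^ 2 ≤ ‖a‖ ^ 2 + (4 * s + 1) * ‖b‖ ^ 2 := by
  rcases eq_or_lt_of_le (norm_nonneg b) with hB | hB
  · obtain rfl : b = 0 := by rw [← norm_eq_zero, ← hB]
    simp
  · by_cases hA : ‖a‖ ≤ 2 * s * ‖b‖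
    · have h1 : ‖a + b‖ ≤ ‖a‖ + ‖b‖ := norm_add_le a b
      nlinarith [norm_nonneg (a + b), norm_nonneg a, hB, hs]
    · push_neg at hA
      have hApos : 0 < ‖a‖ := lt_trans (by positivity) hA
      have hAne : ‖a‖ ≠ 0 := hApos.ne'
      have hBne : ‖b‖ ≠ 0 := hB.ne'
      have hτ : 0 < ‖b‖ / ‖a‖ := div_pos hB hApos
      have hx : ‖(‖a‖)⁻¹ • a‖ = 1 := by
        rw [norm_smul, norm_inv, Real.norm_eq_abs, abs_of_pos hApos,
          inv_mul_cancel₀ hAne]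
      have hy : ‖(‖b‖)⁻¹ • b‖ = 1 := by
        rw [norm_smul, norm_inv, Real.norm_eq_abs, abs_of_pos hB,
          inv_mul_cancel₀ hBne]
      have key := hρ (‖b‖ / ‖a‖) hτ _ _ hx hy
      have e1 : (‖a‖)⁻¹ • a + (‖b‖ / ‖a‖) • (‖b‖)⁻¹ • b = (‖a‖)⁻¹ • (a + b) := by
        rw [smul_smul, smul_add]
        congr 2
        field_simp
      have e2 : (‖a‖)⁻¹ • a - (‖b‖ / ‖a‖) • (‖b‖)⁻¹ • b = (‖a‖)⁻¹ • (a - b) := by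
        rw [smul_smul, smul_sub]
        congr 2
        field_simp
      rw [e1, e2, norm_smul, norm_smul, norm_inv, Real.norm_eq_abs,
        abs_of_pos hApos, div_pow] at key
      -- key : ((‖a‖⁻¹ * ‖a+b‖) + (‖a‖⁻¹ * ‖a-b‖)) / 2 - 1 ≤ s * (‖b‖^2 / ‖a‖^2)
      have h4 : ‖a‖ * ‖a + b‖ + ‖a‖ * ‖a - b‖ ≤ 2 * ‖a‖ ^ 2 + 2 * s * ‖b‖ ^ 2 := by
        rw [inv_mul_eq_div, inv_mul_eq_div] at key
        field_simp at key
        have key2 := key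
        nlinarith [key2, hApos, mul_pos hApos hApos]
      have h6 : ‖a‖ * ‖a + b‖ ≤ ‖a‖ ^ 2 + 2 * s * ‖b‖ ^ 2 := by
        nlinarith [mul_le_mul_of_nonneg_left hab hApos.le]
      -- from ‖a‖·C ≤ ‖a‖² + 2s‖b‖² and 2s‖b‖ < ‖a‖, get C² ≤ ‖a‖² + (4s+1)‖b‖²
      have hAC : (‖a‖ * ‖a + b‖) ^ 2 ≤ (‖a‖ ^ 2 + 2 * s * ‖b‖ ^ 2) ^ 2 := by
        nlinarith [mul_nonneg hApos.le (norm_nonneg (a + b)), h6]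
      have hsq : (2 * s * ‖b‖) ^ 2 ≤ ‖a‖ ^ 2 :=
        pow_le_pow_left₀ (by positivity) hA.le 2
      nlinarith [hAC, hsq, sq_nonneg ‖b‖, mul_pos hApos hApos, norm_nonneg (a + b),
        mul_le_mul_of_nonneg_right hsq (sq_nonneg ‖b‖)]

theorem stmt5 {X : Type*} [NormedAddCommGroup X] [NormedSpace ℝ X]
    (s : ℝ) (hs : 0 < s)
    (hρ : ∀ τ : ℝ, 0 < τ → ∀ x y : X, ‖x‖ = 1 → ‖y‖ = 1 →
      (‖x + τ • y‖ + ‖x - τ • y‖) / 2 - 1 ≤ s * τ ^ 2)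
    (x : ℕ → X)
    (h : ∀ n : ℕ, 1 ≤ n →
      ‖∑ i ∈ Finset.Icc 1 n, x i‖ ≤ ‖(∑ i ∈ Finset.Icc 1 n, x i) - x (n + 1)‖) :
    ∀ n : ℕ, 1 ≤ n →
      ‖∑ i ∈ Finset.Icc 1 n, x i‖ ^ 2 ≤ 10 * (s + 2) * ∑ i ∈ Finset.Icc 1 n, ‖x i‖ ^ 2 := by
  intro n hn
  induction n, hn using Nat.le_induction with
  | base =>
    simp only [Finset.Icc_self, Finset.sum_singleton]
    nlinarith [sq_nonneg ‖x 1‖, hs]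
  | succ n hn ih =>
    rw [Finset.sum_Icc_succ_top (by omega : 1 ≤ n + 1) x,
      Finset.sum_Icc_succ_top (by omega : 1 ≤ n + 1) (fun i => ‖x i‖ ^ 2)]
    have hk := key_step s hs hρ (∑ i ∈ Finset.Icc 1 n, x i) (x (n + 1)) (h n hn)
    have hb : (0:ℝ) ≤ ‖x (n + 1)‖ ^ 2 := sq_nonneg _
    nlinarith [hk, ih, hb, hs]
end

section
/- Fix $s > 0$ and $q \ge 2$. Let $X$ be a Banach space satisfying $\rho_X(\tau) \le s\tau^2$ for all $\tau > 0$. Let $Z_1, Z_2, \ldots$ be $X$-valued random variables with $\mathbb{E}[\|Z_n\|^q] < \infty$ for all $n$, and set $S_n = Z_1 + \cdots + Z_n$. Assume $\mathbb{E}[\|S_n - Z_{n+1}\|^q] \ge \mathbb{E}[\|S_n\|^q]$ for all $n$. Then $(\mathbb{E}[\|S_n\|^q])^{1/q} \le 8\sqrt{s+q} \cdot \sqrt{\sum_{j=1}^n (\mathbb{E}[\|Z_j\|^q])^{2/q}}$. -/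
set_option maxHeartbeats 1000000

open MeasureTheory Set
open scoped ENNReal

private lemma exp_quad {x : ℝ} (hx : |x| ≤ 1) : Real.exp x ≤ 1 + x + x ^ 2 := by
  have h := Real.exp_bound hx (n := 2) (by norm_num)
  have h2 : ∑ m ∈ Finset.range 2, x ^ m / m.factorial = 1 + x := by
    simp [Finset.sum_range_succ]
  rw [h2] at h
  have h3 := (abs_sub_le_iff.1 h).1
  have h4 : |x| ^ 2 = x ^ 2 := sq_abs x
  rw [h4] at h3
  norm_num at h3
  nlinarith [sq_nonneg x]

private lemma pair_mono {p : ℝ} (hp : 1 ≤ p) {m e d : ℝ} (he : 0 ≤ e) (hed : e ≤ d)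
    (hdm : d ≤ m) : (m + e) ^ p + (m - e) ^ p ≤ (m + d) ^ p + (m - d) ^ p := by
  rcases eq_or_lt_of_le (he.trans hed) with hd0 | hd0
  · have he0 : e = 0 := le_antisymm (hd0 ▸ hed) he
    rw [he0, ← hd0]
  · have hm : 0 < m := lt_of_lt_of_le hd0 hdm
    set l : ℝ := (d + e) / (2 * d) with hl
    have hl0 : 0 ≤ l := by positivity
    have hl1 : 0 ≤ 1 - l := by
      rw [hl]; rw [sub_nonneg, div_le_one (by linarith)]; linarith
    have hsum : l + (1 - l) = 1 := by ring
    have c := convexOn_rpow hp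
    have h1 : (m + e) ^ p ≤ l * (m + d) ^ p + (1 - l) * (m - d) ^ p := by
      have := c.2 (Set.mem_Ici.2 (by linarith : (0:ℝ) ≤ m + d))
        (Set.mem_Ici.2 (by linarith : (0:ℝ) ≤ m - d)) hl0 hl1 hsum
      simp only [smul_eq_mul] at this
      have heq : l * (m + d) + (1 - l) * (m - d) = m + e := by
        have hld : l * (2 * d) = d + e := by rw [hl]; exact div_mul_cancel₀ _ (mul_pos two_pos hd0).ne'
        linear_combination hld
      rwa [heq] at this
    have h2 : (m - e) ^ p ≤ (1 - l) * (m + d) ^ p + l * (m - d) ^ p := by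
      have := c.2 (Set.mem_Ici.2 (by linarith : (0:ℝ) ≤ m - d))
        (Set.mem_Ici.2 (by linarith : (0:ℝ) ≤ m + d)) hl0 hl1 hsum
      simp only [smul_eq_mul] at this
      have heq : l * (m - d) + (1 - l) * (m + d) = m - e := by
        have hld : l * (2 * d) = d + e := by rw [hl]; exact div_mul_cancel₀ _ (mul_pos two_pos hd0).ne'
        linear_combination -hld
      rw [heq] at this
      linarith
    linarith

private lemma two_sub {p : ℝ} (hp : 1 ≤ p) {u v : ℝ} (hu : 0 ≤ u) (huv : u ≤ v) :
    2 * v ^ p - u ^ p ≤ (2 * v - u) ^ p := by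
  have c := convexOn_rpow hp
  have h := c.2 (Set.mem_Ici.2 hu) (Set.mem_Ici.2 (by linarith : (0:ℝ) ≤ 2 * v - u))
    (by norm_num : (0:ℝ) ≤ 1/2) (by norm_num : (0:ℝ) ≤ 1/2) (by norm_num)
  simp only [smul_eq_mul] at h
  have heq : 1/2 * u + 1/2 * (2 * v - u) = v := by ring
  rw [heq] at h
  linarith


private lemma sq_rpow_half {q u : ℝ} (hu : 0 ≤ u) : (u ^ 2) ^ (q / 2) = u ^ q := by
  rw [← Real.rpow_natCast u 2, ← Real.rpow_mul hu]
  norm_num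
  congr 1
  ring

private lemma scalar_key {q t : ℝ} (hq : 2 ≤ q) (ht0 : 0 ≤ t) (ht1 : t ≤ 1) :
    (1 + t) ^ q + (1 - t) ^ q ≤ 2 * (1 + 9 * q * t ^ 2) ^ (q / 2) := by
  have hq0 : (0:ℝ) < q := by linarith
  have hq2 : (1:ℝ) ≤ q / 2 := by linarith
  have hb0 : (0:ℝ) ≤ 1 + t := by linarith
  have hb1 : (0:ℝ) ≤ 1 - t := by linarith
  rcases le_or_gt 1 (3 * q * t) with hbig | hsmall
  · -- large t case
    have h1 : (1 + t) ^ 2 ≤ 1 + 9 * q * t ^ 2 := by nlinarith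
    have h2 : (1 + t) ^ q ≤ (1 + 9 * q * t ^ 2) ^ (q / 2) := by
      rw [← sq_rpow_half hb0]
      exact Real.rpow_le_rpow (by positivity) h1 (by positivity)
    have h3 : (1 - t) ^ q ≤ (1 + t) ^ q :=
      Real.rpow_le_rpow hb1 (by linarith) hq0.le
    linarith
  · -- small t case
    have hx : |q * t| ≤ 1 := by
      rw [abs_of_nonneg (by positivity)]; nlinarith
    have e1 : (1 + t) ^ q ≤ Real.exp (q * t) := by
      rcases eq_or_lt_of_le ht0 with h | h
      · rw [← h]
        norm_num
      · rw [Real.rpow_def_of_pos (by linarith)]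
        apply Real.exp_le_exp.2
        have := Real.log_le_sub_one_of_pos (show (0:ℝ) < 1 + t by linarith)
        nlinarith [this]
    have e2 : (1 - t) ^ q ≤ Real.exp (-(q * t)) := by
      rcases eq_or_lt_of_le ht1 with h | h
      · rw [← h]; norm_num
        rw [Real.zero_rpow (by linarith)]
        positivity
      · rw [Real.rpow_def_of_pos (by linarith)]
        apply Real.exp_le_exp.2
        have := Real.log_le_sub_one_of_pos (show (0:ℝ) < 1 - t by linarith)
        nlinarith [this]
    have c1 := exp_quad hx
    have c2 := exp_quad (x := -(q * t)) (by rwa [abs_neg])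
    have bern := one_add_mul_self_le_rpow_one_add
      (show (-1:ℝ) ≤ 9 * q * t ^ 2 by nlinarith [sq_nonneg t]) hq2
    nlinarith [bern, sq_nonneg (q * t)]

private lemma vec_key {X : Type*} [NormedAddCommGroup X] [NormedSpace ℝ X]
    {s q : ℝ} (hs : 0 < s) (hq : 2 ≤ q)
    (hρ : ∀ τ : ℝ, 0 < τ → ∀ x y : X, ‖x‖ = 1 → ‖y‖ = 1 →
      (‖x + τ • y‖ + ‖x - τ • y‖) / 2 - 1 ≤ s * τ ^ 2)
    (x y : X) :
    ‖x + y‖ ^ q + ‖x - y‖ ^ q ≤ 2 * (‖x‖ ^ 2 + 32 * (s + q) * ‖y‖ ^ 2) ^ (q / 2) := by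
  have hq0 : (0:ℝ) < q := by linarith
  have hq2 : (1:ℝ) ≤ q / 2 := by linarith
  set a := ‖x‖ with ha
  set b := ‖y‖ with hb
  have ha0 : 0 ≤ a := norm_nonneg x
  have hb0 : 0 ≤ b := norm_nonneg y
  rcases le_or_gt a (2 * b) with hcase | hcase
  · -- case a ≤ 2b : crude bound
    have hbase : (a + b) ^ 2 ≤ a ^ 2 + 32 * (s + q) * b ^ 2 := by nlinarith
    have habq : (a + b) ^ q ≤ (a ^ 2 + 32 * (s + q) * b ^ 2) ^ (q / 2) := by
      rw [← sq_rpow_half (by linarith : (0:ℝ) ≤ a + b)]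
      exact Real.rpow_le_rpow (by positivity) hbase (by positivity)
    have h1 : ‖x + y‖ ^ q ≤ (a + b) ^ q :=
      Real.rpow_le_rpow (norm_nonneg _) (norm_add_le x y) hq0.le
    have h2 : ‖x - y‖ ^ q ≤ (a + b) ^ q :=
      Real.rpow_le_rpow (norm_nonneg _) (norm_sub_le x y) hq0.le
    linarith
  · -- case 2b < a
    have ha' : 0 < a := by linarith
    rcases eq_or_lt_of_le hb0 with hb' | hb'
    · -- b = 0, i.e. y = 0
      have hy : y = 0 := by rw [← norm_eq_zero, ← hb, ← hb']
      have h1 : ‖x + y‖ = a := by rw [hy, add_zero]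
      have h2 : ‖x - y‖ = a := by rw [hy, sub_zero]
      rw [h1, h2, ← hb']
      norm_num
      rw [sq_rpow_half ha0]
      linarith [Real.rpow_nonneg ha0 q]
    · -- b > 0
      set τ : ℝ := b / a with hτ
      have hτ0 : 0 < τ := by positivity
      have hτh : τ < 1/2 := by rw [hτ, div_lt_iff₀ ha']; linarith
      have haτ : a * τ = b := by rw [hτ]; field_simp
      set u : X := a⁻¹ • x with hu
      set v : X := b⁻¹ • y with hv
      have hun : ‖u‖ = 1 := by
        rw [hu, norm_smul, norm_inv, Real.norm_eq_abs, abs_of_pos ha', ← ha,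
          inv_mul_cancel₀ ha'.ne']
      have hvn : ‖v‖ = 1 := by
        rw [hv, norm_smul, norm_inv, Real.norm_eq_abs, abs_of_pos hb', ← hb,
          inv_mul_cancel₀ hb'.ne']
      have hxu : a • u = x := by rw [hu, smul_smul, mul_inv_cancel₀ ha'.ne', one_smul]
      have hyv : a • (τ • v) = y := by
        rw [hv, smul_smul, smul_smul]
        have hone : a * τ * b⁻¹ = 1 := by
          rw [haτ, mul_inv_cancel₀ hb'.ne']
        rw [hone, one_smul]
      have hA : ‖x + y‖ = a * ‖u + τ • v‖ := by
        rw [← hxu, ← hyv, ← smul_add, norm_smul, Real.norm_eq_abs, abs_of_pos ha']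
      have hB : ‖x - y‖ = a * ‖u - τ • v‖ := by
        rw [← hxu, ← hyv, ← smul_sub, norm_smul, Real.norm_eq_abs, abs_of_pos ha']
      set A := ‖x + y‖ with hAd
      set B := ‖x - y‖ with hBd
      have hρ' := hρ τ hτ0 u v hun hvn
      have hABs : A + B ≤ 2 * a * (1 + s * τ ^ 2) := by
        rw [hA, hB]
        have hmul := mul_le_mul_of_nonneg_left hρ' ha0
        linarith [hmul]
      have hABt : A + B ≤ 2 * a * (1 + τ) := by
        have h1 : A ≤ a + b := norm_add_le x y
        have h2 : B ≤ a + b := norm_sub_le x y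
        linarith [h1, h2, haτ]
      have hABge : 2 * a ≤ A + B := by
        have : (2:ℝ) • x = (x + y) + (x - y) := by module
        have h2 := norm_add_le (x + y) (x - y)
        rw [← this, norm_smul] at h2
        simp only [Real.norm_ofNat] at h2 -- ‖(2:ℝ)‖ = 2
        rw [← ha] at h2
        linarith [h2]
      have hdiff : |A - B| ≤ 2 * b := by
        rw [abs_sub_le_iff]
        constructor
        · have : x + y = (x - y) + (2:ℝ) • y := by module
          have h2 := norm_add_le (x - y) ((2:ℝ) • y)
          rw [← this, norm_smul] at h2
          simp only [Real.norm_ofNat] at h2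
          rw [← hb] at h2
          linarith [h2]
        · have : x - y = (x + y) - (2:ℝ) • y := by module
          have h2 := norm_sub_le (x + y) ((2:ℝ) • y)
          rw [← this, norm_smul] at h2
          simp only [Real.norm_ofNat] at h2
          rw [← hb] at h2
          linarith [h2]
      clear_value A B
      clear hA hB hAd hBd hρ' hun hvn hxu hyv hu hv
      clear_value τ
      clear hτ
      set m : ℝ := (A + B) / 2 with hm
      set e : ℝ := (A - B) / 2 with he
      have hdm : b ≤ m := by
        have : a ≤ m := by rw [hm]; linarith
        linarith
      have heb : |e| ≤ b := by
        rw [he, abs_div, abs_of_pos (by norm_num : (0:ℝ) < 2), div_le_iff₀ (by norm_num)]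
        linarith [hdiff]
      -- step 1 : A^q + B^q ≤ (m+b)^q + (m-b)^q
      have hstep1 : A ^ q + B ^ q ≤ (m + b) ^ q + (m - b) ^ q := by
        have key := pair_mono (by linarith : (1:ℝ) ≤ q) (abs_nonneg e) heb hdm
        rcases le_or_gt 0 e with he0 | he0
        · have h1 : m + |e| = A := by rw [abs_of_nonneg he0, hm, he]; ring
          have h2 : m - |e| = B := by rw [abs_of_nonneg he0, hm, he]; ring
          rw [h1, h2] at key; exact key
        · have h1 : m + |e| = B := by rw [abs_of_neg he0, hm, he]; ring
          have h2 : m - |e| = A := by rw [abs_of_neg he0, hm, he]; ring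
          rw [h1, h2] at key; linarith
      clear_value m e
      set c : ℝ := min (s * τ ^ 2) τ with hc
      have hc0 : 0 ≤ c := le_min (by positivity) hτ0.le
      have hcτ : c ≤ τ := min_le_right _ _
      have hcs : c ≤ s * τ ^ 2 := min_le_left _ _
      clear_value c
      set m0 : ℝ := a * (1 + c) with hm0
      have hmm0 : m ≤ m0 := by
        rcases min_cases (s * τ ^ 2) τ with ⟨hceq, _⟩ | ⟨hceq, _⟩
        · rw [hm0, hc, hceq]; rw [hm]; linarith
        · rw [hm0, hc, hceq]; rw [hm]; linarith
      have hmb : 0 ≤ m - b := by linarith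
      -- step 2 : monotonicity in m
      have hstep2 : (m + b) ^ q + (m - b) ^ q ≤ (m0 + b) ^ q + (m0 - b) ^ q := by
        have h1 : (m + b) ^ q ≤ (m0 + b) ^ q :=
          Real.rpow_le_rpow (by linarith) (by linarith) hq0.le
        have h2 : (m - b) ^ q ≤ (m0 - b) ^ q :=
          Real.rpow_le_rpow hmb (by linarith) hq0.le
        linarith
      -- step 3 : scalar inequality on V = 1 + c
      set V : ℝ := 1 + c with hV
      have hV1 : 1 ≤ V := by rw [hV]; linarith
      have hV0 : 0 < V := by linarith
      set t : ℝ := τ / V with ht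
      have ht0 : 0 ≤ t := by positivity
      have ht1 : t ≤ 1 := by
        rw [ht, div_le_one hV0]; linarith
      have hVt : V * t = τ := by rw [ht]; field_simp
      have hm0b : m0 + b = a * (V * (1 + t)) := by
        rw [hm0, ← haτ, ← hVt, hV]; ring
      have hm0b' : m0 - b = a * (V * (1 - t)) := by
        rw [hm0, ← haτ, ← hVt, hV]; ring
      clear_value m0 V t
      have hsc := scalar_key hq ht0 ht1
      have h1t : (0:ℝ) ≤ 1 + t := by linarith
      have h1t' : (0:ℝ) ≤ 1 - t := by linarith
      have hfac : (m0 + b) ^ q + (m0 - b) ^ q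
          = a ^ q * (V ^ q * ((1 + t) ^ q + (1 - t) ^ q)) := by
        rw [hm0b, hm0b', Real.mul_rpow ha0 (mul_nonneg hV0.le h1t),
          Real.mul_rpow ha0 (mul_nonneg hV0.le h1t'),
          Real.mul_rpow hV0.le h1t, Real.mul_rpow hV0.le h1t']
        ring
      -- combine V^q * (1+9qt^2)^(q/2) = (V^2 + 9q τ^2)^(q/2)
      have hq0' : (0:ℝ) ≤ q := by linarith
      have ht2 : (0:ℝ) ≤ 1 + 9 * q * t ^ 2 := by
        have h9 := mul_nonneg (mul_nonneg (by norm_num : (0:ℝ) ≤ (9:ℝ)) hq0') (sq_nonneg t)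
        linarith [h9]
      have hVt2 : V ^ 2 * t ^ 2 = τ ^ 2 := by rw [← hVt]; ring
      have hsqc : V ^ 2 * (1 + 9 * q * t ^ 2) = V ^ 2 + 9 * q * τ ^ 2 := by
        rw [← hVt2]; ring
      have hcomb : V ^ q * (1 + 9 * q * t ^ 2) ^ (q / 2)
          = (V ^ 2 + 9 * q * τ ^ 2) ^ (q / 2) := by
        rw [← sq_rpow_half hV0.le, ← Real.mul_rpow (sq_nonneg V) ht2, hsqc]
      -- base bound
      have hbase : V ^ 2 + 9 * q * τ ^ 2 ≤ 1 + 32 * (s + q) * τ ^ 2 := by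
        rw [hV]
        have k1 : c * c ≤ c * τ := mul_le_mul_of_nonneg_left hcτ hc0
        have k2 : c * τ ≤ s * τ ^ 2 * τ := mul_le_mul_of_nonneg_right hcs hτ0.le
        have k3 : s * τ ^ 2 * τ ≤ s * τ ^ 2 * (1 / 2) :=
          mul_le_mul_of_nonneg_left hτh.le (by positivity)
        have k4 : (0:ℝ) ≤ s * τ ^ 2 := by positivity
        have k5 : (0:ℝ) ≤ q * τ ^ 2 := mul_nonneg hq0' (sq_nonneg τ)
        linarith [k1, k2, k3, k4, k5]
      have hfinal : (V ^ 2 + 9 * q * τ ^ 2) ^ (q / 2)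
          ≤ (1 + 32 * (s + q) * τ ^ 2) ^ (q / 2) :=
        Real.rpow_le_rpow (by positivity) hbase (by positivity)
      -- reassemble with a
      have h32 : (0:ℝ) ≤ 1 + 32 * (s + q) * τ ^ 2 := by
        have h9 := mul_nonneg (mul_nonneg (by norm_num : (0:ℝ) ≤ (32:ℝ))
          (by linarith : (0:ℝ) ≤ s + q)) (sq_nonneg τ)
        linarith [h9]
      have hsqa : a ^ 2 * (1 + 32 * (s + q) * τ ^ 2) = a ^ 2 + 32 * (s + q) * b ^ 2 := by
        rw [← haτ]; ring
      have hre : a ^ q * (1 + 32 * (s + q) * τ ^ 2) ^ (q / 2)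
          = (a ^ 2 + 32 * (s + q) * b ^ 2) ^ (q / 2) := by
        rw [← sq_rpow_half ha0, ← Real.mul_rpow (sq_nonneg a) h32, hsqa]
      have haq : 0 ≤ a ^ q := Real.rpow_nonneg ha0 q
      have hVq : 0 ≤ V ^ q := Real.rpow_nonneg hV0.le q
      have hmono2 : a ^ q * (V ^ q * ((1 + t) ^ q + (1 - t) ^ q))
          ≤ a ^ q * (V ^ q * (2 * (1 + 9 * q * t ^ 2) ^ (q / 2))) :=
        mul_le_mul_of_nonneg_left (mul_le_mul_of_nonneg_left hsc hVq) haq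
      have hmono3 : a ^ q * (V ^ 2 + 9 * q * τ ^ 2) ^ (q / 2)
          ≤ a ^ q * (1 + 32 * (s + q) * τ ^ 2) ^ (q / 2) :=
        mul_le_mul_of_nonneg_left hfinal haq
      calc A ^ q + B ^ q ≤ (m0 + b) ^ q + (m0 - b) ^ q := le_trans hstep1 hstep2
        _ = a ^ q * (V ^ q * ((1 + t) ^ q + (1 - t) ^ q)) := hfac
        _ ≤ a ^ q * (V ^ q * (2 * (1 + 9 * q * t ^ 2) ^ (q / 2))) := hmono2
        _ = 2 * (a ^ q * (V ^ q * (1 + 9 * q * t ^ 2) ^ (q / 2))) := by ring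
        _ = 2 * (a ^ q * (V ^ 2 + 9 * q * τ ^ 2) ^ (q / 2)) := by rw [hcomb]
        _ ≤ 2 * (a ^ q * (1 + 32 * (s + q) * τ ^ 2) ^ (q / 2)) := by linarith
        _ = 2 * (a ^ 2 + 32 * (s + q) * b ^ 2) ^ (q / 2) := by rw [hre]

private lemma rpow_add_le {p x y : ℝ} (hx : 0 ≤ x) (hy : 0 ≤ y) (hp : 0 ≤ p) :
    (x + y) ^ p ≤ 2 ^ p * (x ^ p + y ^ p) := by
  have h1 : x + y ≤ 2 * max x y := by
    rcases le_total x y with h | h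
    · rw [max_eq_right h]; linarith
    · rw [max_eq_left h]; linarith
  have hm : (0:ℝ) ≤ max x y := le_max_of_le_left hx
  have h2 : (x + y) ^ p ≤ (2 * max x y) ^ p :=
    Real.rpow_le_rpow (by linarith) h1 hp
  rw [Real.mul_rpow (by norm_num) hm] at h2
  have h3 : (max x y) ^ p ≤ x ^ p + y ^ p := by
    rcases le_total x y with h | h
    · rw [max_eq_right h]; nlinarith [Real.rpow_nonneg hx p]
    · rw [max_eq_left h]; nlinarith [Real.rpow_nonneg hy p]
  have h4 : (0:ℝ) ≤ (2:ℝ) ^ p := Real.rpow_nonneg (by norm_num) p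
  nlinarith [mul_le_mul_of_nonneg_left h3 h4]

private lemma integrable_rpow_add {Ω : Type*} [MeasurableSpace Ω] {μ : Measure Ω}
    {X : Type*} [NormedAddCommGroup X] {q : ℝ} (hq : 0 < q) (f g : Ω → X)
    (hfm : AEStronglyMeasurable f μ) (hgm : AEStronglyMeasurable g μ)
    (hf : Integrable (fun ω => ‖f ω‖ ^ q) μ) (hg : Integrable (fun ω => ‖g ω‖ ^ q) μ) :
    Integrable (fun ω => ‖f ω + g ω‖ ^ q) μ := by
  have hmeas : AEStronglyMeasurable (fun ω => ‖f ω + g ω‖ ^ q) μ :=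
    (Real.continuous_rpow_const hq.le).comp_aestronglyMeasurable (hfm.add hgm).norm
  refine Integrable.mono' ((hf.add hg).const_mul ((2:ℝ) ^ q)) hmeas
    (Filter.Eventually.of_forall fun ω => ?_)
  rw [Real.norm_eq_abs, abs_of_nonneg (Real.rpow_nonneg (norm_nonneg _) q)]
  calc ‖f ω + g ω‖ ^ q ≤ (‖f ω‖ + ‖g ω‖) ^ q :=
        Real.rpow_le_rpow (norm_nonneg _) (norm_add_le _ _) hq.le
    _ ≤ 2 ^ q * (‖f ω‖ ^ q + ‖g ω‖ ^ q) :=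
        rpow_add_le (norm_nonneg _) (norm_nonneg _) hq.le

private lemma integrable_rpow_add' {Ω : Type*} [MeasurableSpace Ω] {μ : Measure Ω}
    {p : ℝ} (hp : 0 < p) (f g : Ω → ℝ)
    (hfm : AEStronglyMeasurable f μ) (hgm : AEStronglyMeasurable g μ)
    (hf0 : ∀ ω, 0 ≤ f ω) (hg0 : ∀ ω, 0 ≤ g ω)
    (hf : Integrable (fun ω => f ω ^ p) μ) (hg : Integrable (fun ω => g ω ^ p) μ) :
    Integrable (fun ω => (f ω + g ω) ^ p) μ := by
  have hmeas : AEStronglyMeasurable (fun ω => (f ω + g ω) ^ p) μ :=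
    (Real.continuous_rpow_const hp.le).comp_aestronglyMeasurable (hfm.add hgm)
  refine Integrable.mono' ((hf.add hg).const_mul ((2:ℝ) ^ p)) hmeas
    (Filter.Eventually.of_forall fun ω => ?_)
  have h0 : 0 ≤ f ω + g ω := by have := hf0 ω; have := hg0 ω; linarith
  rw [Real.norm_eq_abs, abs_of_nonneg (Real.rpow_nonneg h0 p)]
  exact rpow_add_le (hf0 ω) (hg0 ω) hp.le

private lemma minkowski_int {Ω : Type*} [MeasurableSpace Ω] {μ : Measure Ω}
    {p : ℝ} (hp : 1 ≤ p) (f g : Ω → ℝ)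
    (hfm : AEStronglyMeasurable f μ) (hgm : AEStronglyMeasurable g μ)
    (hf0 : ∀ ω, 0 ≤ f ω) (hg0 : ∀ ω, 0 ≤ g ω)
    (hf : Integrable (fun ω => f ω ^ p) μ) (hg : Integrable (fun ω => g ω ^ p) μ) :
    ∫ ω, (f ω + g ω) ^ p ∂μ
      ≤ ((∫ ω, f ω ^ p ∂μ) ^ (1/p) + (∫ ω, g ω ^ p ∂μ) ^ (1/p)) ^ p := by
  have hp0 : (0:ℝ) < p := by linarith
  have hfg : Integrable (fun ω => (f ω + g ω) ^ p) μ :=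
    integrable_rpow_add' hp0 f g hfm hgm hf0 hg0 hf hg
  set F : Ω → ℝ≥0∞ := fun ω => ENNReal.ofReal (f ω) with hF
  set G : Ω → ℝ≥0∞ := fun ω => ENNReal.ofReal (g ω) with hG
  have hFm : AEMeasurable F μ := ENNReal.measurable_ofReal.comp_aemeasurable hfm.aemeasurable
  have hGm : AEMeasurable G μ := ENNReal.measurable_ofReal.comp_aemeasurable hgm.aemeasurable
  have hkey := ENNReal.lintegral_Lp_add_le hFm hGm hp
  set IL := ∫ ω, (f ω + g ω) ^ p ∂μ with hIL
  set If := ∫ ω, f ω ^ p ∂μ with hIf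
  set Ig := ∫ ω, g ω ^ p ∂μ with hIg
  have hIL0 : 0 ≤ IL := integral_nonneg fun ω =>
    Real.rpow_nonneg (by have := hf0 ω; have := hg0 ω; linarith) p
  have hIf0 : 0 ≤ If := integral_nonneg fun ω => Real.rpow_nonneg (hf0 ω) p
  have hIg0 : 0 ≤ Ig := integral_nonneg fun ω => Real.rpow_nonneg (hg0 ω) p
  have cf : ∫⁻ ω, F ω ^ p ∂μ = ENNReal.ofReal If := by
    have h1 : ∀ ω, F ω ^ p = ENNReal.ofReal (f ω ^ p) := fun ω =>
      ENNReal.ofReal_rpow_of_nonneg (hf0 ω) hp0.le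
    simp_rw [h1]
    exact (ofReal_integral_eq_lintegral_ofReal hf
      (Filter.Eventually.of_forall fun ω => Real.rpow_nonneg (hf0 ω) p)).symm
  have cg : ∫⁻ ω, G ω ^ p ∂μ = ENNReal.ofReal Ig := by
    have h1 : ∀ ω, G ω ^ p = ENNReal.ofReal (g ω ^ p) := fun ω =>
      ENNReal.ofReal_rpow_of_nonneg (hg0 ω) hp0.le
    simp_rw [h1]
    exact (ofReal_integral_eq_lintegral_ofReal hg
      (Filter.Eventually.of_forall fun ω => Real.rpow_nonneg (hg0 ω) p)).symm
  have cL : ∫⁻ ω, ((F + G) ω) ^ p ∂μ = ENNReal.ofReal IL := by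
    have h1 : ∀ ω, ((F + G) ω) ^ p = ENNReal.ofReal ((f ω + g ω) ^ p) := fun ω => by
      rw [Pi.add_apply, hF, hG]
      rw [← ENNReal.ofReal_add (hf0 ω) (hg0 ω)]
      exact ENNReal.ofReal_rpow_of_nonneg
        (by have := hf0 ω; have := hg0 ω; linarith) hp0.le
    simp_rw [h1]
    exact (ofReal_integral_eq_lintegral_ofReal hfg
      (Filter.Eventually.of_forall fun ω =>
        Real.rpow_nonneg (by have := hf0 ω; have := hg0 ω; linarith) p)).symm
  rw [cf, cg, cL] at hkey
  rw [ENNReal.ofReal_rpow_of_nonneg hIL0 (by positivity),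
    ENNReal.ofReal_rpow_of_nonneg hIf0 (by positivity),
    ENNReal.ofReal_rpow_of_nonneg hIg0 (by positivity),
    ← ENNReal.ofReal_add (Real.rpow_nonneg hIf0 _) (Real.rpow_nonneg hIg0 _)] at hkey
  have hkey2 := ENNReal.rpow_le_rpow hkey hp0.le
  rw [ENNReal.ofReal_rpow_of_nonneg (Real.rpow_nonneg hIL0 _) hp0.le,
    ENNReal.ofReal_rpow_of_nonneg
      (by positivity : (0:ℝ) ≤ If ^ (1/p) + Ig ^ (1/p)) hp0.le] at hkey2
  rw [ENNReal.ofReal_le_ofReal_iff (by positivity)] at hkey2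
  have hcollapse : (IL ^ (1/p)) ^ p = IL := by
    rw [← Real.rpow_mul hIL0, one_div_mul_cancel hp0.ne', Real.rpow_one]
  rwa [hcollapse] at hkey2

theorem stmt6 {X : Type*} [NormedAddCommGroup X] [NormedSpace ℝ X]
    {Ω : Type*} [MeasurableSpace Ω] (μ : Measure Ω) [IsProbabilityMeasure μ]
    (s q : ℝ) (hs : 0 < s) (hq : 2 ≤ q)
    (hρ : ∀ τ : ℝ, 0 < τ → ∀ x y : X, ‖x‖ = 1 → ‖y‖ = 1 →
      (‖x + τ • y‖ + ‖x - τ • y‖) / 2 - 1 ≤ s * τ ^ 2)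
    (Z : ℕ → Ω → X)
    (hmeas : ∀ n, AEStronglyMeasurable (Z n) μ)
    (hint : ∀ n, Integrable (fun ω => ‖Z n ω‖ ^ q) μ)
    (h : ∀ n : ℕ, 1 ≤ n →
      ∫ ω, ‖∑ i ∈ Finset.Icc 1 n, Z i ω‖ ^ q ∂μ
        ≤ ∫ ω, ‖(∑ i ∈ Finset.Icc 1 n, Z i ω) - Z (n + 1) ω‖ ^ q ∂μ)
    (n : ℕ) (hn : 1 ≤ n) :
    (∫ ω, ‖∑ i ∈ Finset.Icc 1 n, Z i ω‖ ^ q ∂μ) ^ (1 / q)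
      ≤ 8 * Real.sqrt (s + q) *
        Real.sqrt (∑ j ∈ Finset.Icc 1 n, (∫ ω, ‖Z j ω‖ ^ q ∂μ) ^ (2 / q)) := by
  have hq0 : (0:ℝ) < q := by linarith
  have hp1 : (1:ℝ) ≤ q / 2 := by linarith
  set S : ℕ → Ω → X := fun m ω => ∑ i ∈ Finset.Icc 1 m, Z i ω with hS
  have hSmeas : ∀ m, AEStronglyMeasurable (S m) μ := fun m =>
    Finset.aestronglyMeasurable_fun_sum _ fun i _ => hmeas i
  have hSsucc : ∀ m : ℕ, ∀ ω, S (m + 1) ω = S m ω + Z (m + 1) ω := by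
    intro m ω
    show ∑ i ∈ Finset.Icc 1 (m+1), Z i ω = (∑ i ∈ Finset.Icc 1 m, Z i ω) + Z (m+1) ω
    rw [← Finset.insert_Icc_right_eq_Icc_add_one (by omega : 1 ≤ m + 1),
      Finset.sum_insert (by simp), add_comm]
  have hSint : ∀ m, Integrable (fun ω => ‖S m ω‖ ^ q) μ := by
    intro m
    induction m with
    | zero =>
        have h0 : (fun ω => ‖S 0 ω‖ ^ q) = fun _ => (0:ℝ) := by
          funext ω
          show ‖∑ i ∈ Finset.Icc 1 0, Z i ω‖ ^ q = 0
          rw [Finset.Icc_eq_empty (by omega), Finset.sum_empty, norm_zero,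
            Real.zero_rpow hq0.ne']
        rw [h0]
        exact integrable_const 0
    | succ m ih =>
        have heq : (fun ω => ‖S (m+1) ω‖ ^ q) = fun ω => ‖S m ω + Z (m+1) ω‖ ^ q := by
          funext ω; rw [hSsucc m ω]
        rw [heq]
        exact integrable_rpow_add hq0 _ _ (hSmeas m) (hmeas (m+1)) ih (hint (m+1))
  have hSsubint : ∀ m, Integrable (fun ω => ‖S m ω - Z (m + 1) ω‖ ^ q) μ := by
    intro m
    have h1 : Integrable (fun ω => ‖-(Z (m+1) ω)‖ ^ q) μ := by
      simpa [norm_neg] using hint (m+1)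
    have h2 := integrable_rpow_add hq0 (S m) (fun ω => -(Z (m+1) ω)) (hSmeas m)
      (hmeas (m+1)).neg (hSint m) h1
    simpa [sub_eq_add_neg] using h2
  set J : ℕ → ℝ := fun m => ∫ ω, ‖S m ω‖ ^ q ∂μ with hJ
  have hJ0 : ∀ m, 0 ≤ J m := fun m =>
    integral_nonneg fun ω => Real.rpow_nonneg (norm_nonneg _) q
  set a : ℕ → ℝ := fun j => (∫ ω, ‖Z j ω‖ ^ q ∂μ) ^ (2/q) with ha
  have ha0 : ∀ j, 0 ≤ a j := fun j => Real.rpow_nonneg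
    (integral_nonneg fun ω => Real.rpow_nonneg (norm_nonneg _) q) _
  set K : ℝ := 32 * (s + q) with hK
  have hK0 : (0:ℝ) < K := by rw [hK]; nlinarith
  have hqne : q ≠ 0 := hq0.ne'
  have hcol1 : ∀ {w : ℝ}, 0 ≤ w → (w ^ (2/q)) ^ (q/2) = w := by
    intro w hw
    rw [← Real.rpow_mul hw]
    rw [show (2/q) * (q/2) = 1 by field_simp]
    exact Real.rpow_one w
  have hcol2 : ∀ {w : ℝ}, 0 ≤ w → (w ^ (q/2)) ^ (2/q) = w := by
    intro w hw
    rw [← Real.rpow_mul hw]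
    rw [show (q/2) * (2/q) = 1 by field_simp]
    exact Real.rpow_one w
  -- main recursion
  have hrec : ∀ m : ℕ, 1 ≤ m →
      (J (m+1)) ^ (2/q) ≤ (J m) ^ (2/q) + 2 * K * a (m+1) := by
    intro m hm
    have hpt : ∀ ω, ‖S (m+1) ω‖ ^ q + ‖S m ω - Z (m+1) ω‖ ^ q
        ≤ 2 * (‖S m ω‖ ^ 2 + K * ‖Z (m+1) ω‖ ^ 2) ^ (q/2) := by
      intro ω
      rw [hSsucc m ω, hK]
      exact vec_key hs hq hρ (S m ω) (Z (m+1) ω)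
    -- integrability of pieces
    have hfm : AEStronglyMeasurable (fun ω => ‖S m ω‖ ^ 2) μ :=
      (continuous_pow 2).comp_aestronglyMeasurable (hSmeas m).norm
    have hgm : AEStronglyMeasurable (fun ω => K * ‖Z (m+1) ω‖ ^ 2) μ :=
      (continuous_const.mul (continuous_pow 2)).comp_aestronglyMeasurable
        (hmeas (m+1)).norm
    have hf0 : ∀ ω, (0:ℝ) ≤ ‖S m ω‖ ^ 2 := fun ω => sq_nonneg _
    have hg0 : ∀ ω, (0:ℝ) ≤ K * ‖Z (m+1) ω‖ ^ 2 := fun ω =>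
      mul_nonneg hK0.le (sq_nonneg _)
    have hfeq : (fun ω => (‖S m ω‖ ^ 2) ^ (q/2)) = fun ω => ‖S m ω‖ ^ q := by
      funext ω; exact sq_rpow_half (norm_nonneg _)
    have hgeq : (fun ω => (K * ‖Z (m+1) ω‖ ^ 2) ^ (q/2))
        = fun ω => K ^ (q/2) * ‖Z (m+1) ω‖ ^ q := by
      funext ω
      rw [Real.mul_rpow hK0.le (sq_nonneg _), sq_rpow_half (norm_nonneg _)]
    have hfint : Integrable (fun ω => (‖S m ω‖ ^ 2) ^ (q/2)) μ := by
      rw [hfeq]; exact hSint m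
    have hgint : Integrable (fun ω => (K * ‖Z (m+1) ω‖ ^ 2) ^ (q/2)) μ := by
      rw [hgeq]; exact (hint (m+1)).const_mul _
    have hGint : Integrable (fun ω => (‖S m ω‖ ^ 2 + K * ‖Z (m+1) ω‖ ^ 2) ^ (q/2)) μ :=
      integrable_rpow_add' (by linarith) _ _ hfm hgm hf0 hg0 hfint hgint
    -- integrate the pointwise bound
    have hii : J (m+1) + (∫ ω, ‖S m ω - Z (m+1) ω‖ ^ q ∂μ)
        ≤ 2 * ∫ ω, (‖S m ω‖ ^ 2 + K * ‖Z (m+1) ω‖ ^ 2) ^ (q/2) ∂μ := by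
      calc J (m+1) + (∫ ω, ‖S m ω - Z (m+1) ω‖ ^ q ∂μ)
          = ∫ ω, (‖S (m+1) ω‖ ^ q + ‖S m ω - Z (m+1) ω‖ ^ q) ∂μ :=
            (integral_add (hSint (m+1)) (hSsubint m)).symm
        _ ≤ ∫ ω, 2 * (‖S m ω‖ ^ 2 + K * ‖Z (m+1) ω‖ ^ 2) ^ (q/2) ∂μ :=
            integral_mono ((hSint (m+1)).add (hSsubint m)) (hGint.const_mul 2)
              (fun ω => hpt ω)
        _ = 2 * ∫ ω, (‖S m ω‖ ^ 2 + K * ‖Z (m+1) ω‖ ^ 2) ^ (q/2) ∂μ :=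
            integral_const_mul 2 _
    have hh := h m hm
    -- Minkowski
    have mink := minkowski_int hp1 (fun ω => ‖S m ω‖ ^ 2)
      (fun ω => K * ‖Z (m+1) ω‖ ^ 2) hfm hgm hf0 hg0 hfint hgint
    rw [one_div_div] at mink
    rw [hfeq, hgeq] at mink
    have hZint0 : 0 ≤ ∫ ω, ‖Z (m+1) ω‖ ^ q ∂μ :=
      integral_nonneg fun ω => Real.rpow_nonneg (norm_nonneg _) q
    have hgval : (∫ ω, K ^ (q/2) * ‖Z (m+1) ω‖ ^ q ∂μ) ^ (2/q) = K * a (m+1) := by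
      rw [integral_const_mul,
        Real.mul_rpow (Real.rpow_nonneg hK0.le _) hZint0, hcol2 hK0.le]
    rw [hgval] at mink
    -- mink : ∫ (f+g)^(q/2) ≤ ((J m)^(2/q) + K * a (m+1))^(q/2)
    set U : ℝ := (J m) ^ (2/q) with hU
    have hU0 : 0 ≤ U := Real.rpow_nonneg (hJ0 m) _
    have hKa0 : 0 ≤ K * a (m+1) := mul_nonneg hK0.le (ha0 (m+1))
    have hts := two_sub hp1 hU0 (by linarith : U ≤ U + K * a (m+1))
    have hJm : U ^ (q/2) = J m := hcol1 (hJ0 m)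
    have hJ1 : J (m+1) ≤ (U + 2 * (K * a (m+1))) ^ (q/2) := by
      have e1 : 2 * (U + K * a (m+1)) - U = U + 2 * (K * a (m+1)) := by ring
      calc J (m+1) ≤ 2 * (∫ ω, (‖S m ω‖ ^ 2 + K * ‖Z (m+1) ω‖ ^ 2) ^ (q/2) ∂μ) - J m := by
            linarith [hii, hh]
        _ ≤ 2 * ((U + K * a (m+1)) ^ (q/2)) - U ^ (q/2) := by
            rw [hJm]; linarith [mink]
        _ ≤ (2 * (U + K * a (m+1)) - U) ^ (q/2) := hts
        _ = (U + 2 * (K * a (m+1))) ^ (q/2) := by rw [e1]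
    have hW0 : 0 ≤ U + 2 * (K * a (m+1)) := by linarith
    have := Real.rpow_le_rpow (hJ0 (m+1)) hJ1 (by positivity : (0:ℝ) ≤ 2/q)
    rw [hcol2 hW0] at this
    linarith [this]
  -- induction
  have h2K : (1:ℝ) ≤ 2 * K := by rw [hK]; nlinarith
  have hmain : ∀ m : ℕ, 1 ≤ m →
      (J m) ^ (2/q) ≤ 2 * K * ∑ j ∈ Finset.Icc 1 m, a j := by
    intro m hm
    induction m, hm using Nat.le_induction with
    | base =>
        have hS1 : ∀ ω, S 1 ω = Z 1 ω := by
          intro ω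
          show ∑ i ∈ Finset.Icc 1 1, Z i ω = Z 1 ω
          rw [Finset.Icc_self, Finset.sum_singleton]
        have hJ1 : J 1 = ∫ ω, ‖Z 1 ω‖ ^ q ∂μ := by
          show (∫ ω, ‖S 1 ω‖ ^ q ∂μ) = _
          congr 1
          funext ω
          rw [hS1 ω]
        rw [Finset.Icc_self, Finset.sum_singleton]
        have : (J 1) ^ (2/q) = a 1 := by rw [hJ1, ha]
        rw [this]
        nlinarith [ha0 1, mul_le_mul_of_nonneg_right h2K (ha0 1)]
    | succ m hm ih =>
        have hr := hrec m hm
        have hsum : ∑ j ∈ Finset.Icc 1 (m+1), a j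
            = (∑ j ∈ Finset.Icc 1 m, a j) + a (m+1) := by
          rw [← Finset.insert_Icc_right_eq_Icc_add_one (by omega : 1 ≤ m + 1),
            Finset.sum_insert (by simp), add_comm]
        rw [hsum]
        calc (J (m+1)) ^ (2/q) ≤ (J m) ^ (2/q) + 2 * K * a (m+1) := hr
          _ ≤ 2 * K * (∑ j ∈ Finset.Icc 1 m, a j) + 2 * K * a (m+1) := by linarith
          _ = 2 * K * ((∑ j ∈ Finset.Icc 1 m, a j) + a (m+1)) := by ring
  -- conclusion
  have hfin := hmain n hn
  show (J n) ^ (1/q) ≤ 8 * Real.sqrt (s + q) * Real.sqrt (∑ j ∈ Finset.Icc 1 n, a j)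
  have hsum0 : 0 ≤ ∑ j ∈ Finset.Icc 1 n, a j := Finset.sum_nonneg fun j _ => ha0 j
  have e1 : (J n) ^ (1/q) = ((J n) ^ (2/q)) ^ (1/(2:ℝ)) := by
    rw [← Real.rpow_mul (hJ0 n)]
    congr 1
    field_simp
  rw [e1]
  have e2 : ((J n) ^ (2/q)) ^ (1/(2:ℝ))
      ≤ (2 * K * ∑ j ∈ Finset.Icc 1 n, a j) ^ (1/(2:ℝ)) :=
    Real.rpow_le_rpow (Real.rpow_nonneg (hJ0 n) _) hfin (by norm_num)
  have e3 : (2 * K * ∑ j ∈ Finset.Icc 1 n, a j) ^ (1/(2:ℝ))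
      = 8 * Real.sqrt (s + q) * Real.sqrt (∑ j ∈ Finset.Icc 1 n, a j) := by
    rw [← Real.sqrt_eq_rpow]
    rw [Real.sqrt_mul (by positivity : (0:ℝ) ≤ 2 * K)]
    have : 2 * K = 64 * (s + q) := by rw [hK]; ring
    rw [this, show (64:ℝ) * (s + q) = 8 ^ 2 * (s + q) by norm_num,
      Real.sqrt_mul (by positivity) (s + q), Real.sqrt_sq (by norm_num : (0:ℝ) ≤ 8)]
  rw [← e3]
  exact e2
end

section
/- Let $G=(V,E)$ be an $n$-vertex $d$-regular graph whose normalized adjacency matrix $A(G)$ has eigenvalues $1 = \lambda_1 \ge \lambda_2 \ge \cdots \ge \lambda_n$. Fix $p \in [1, \infty]$, and assume that $L_2(V)$ has an orthonormal eigenbasis of $A(G)$ consisting of vectors whose entries are all bounded by 1 in absolute value. Then for every nonempty proper subset $S \subsetneq V$, $\left|\frac{E_G(S, V\setminus S)}{\frac{d}{n}|S|(n-|S|)} - 1\right| \le \left(\sum_{i=2}^n |\lambda_i|^p\right)^{1/p} \left(\frac{|S|^{\frac{1}{p+1}}(n-|S|)^{\frac{p}{p+1}} + |S|^{\frac{p}{p+1}}(n-|S|)^{\frac{1}{p+1}}}{n}\right)^{\frac{p+1}{p}}$.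 -/
theorem aux_hoelder_sum {ι : Type*} (p : ℝ) (hp : 1 ≤ p) (J : Finset ι) (A B : ι → ℝ)
    (hA : ∀ i ∈ J, 0 ≤ A i) (hB : ∀ i ∈ J, 0 ≤ B i) :
    ∑ i ∈ J, (A i) ^ (1/p) * (B i) ^ (1 - 1/p)
      ≤ (∑ i ∈ J, A i) ^ (1/p) * (∑ i ∈ J, B i) ^ (1 - 1/p) := by
  have hp0 : 0 < p := lt_of_lt_of_le one_pos hp
  have hw1 : 0 < 1/p := by positivity
  have hw2 : 0 ≤ 1 - 1/p := by
    have h1 : 1/p ≤ 1 := by rw [div_le_one hp0]; exact hp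
    linarith
  have hSA : 0 ≤ ∑ i ∈ J, A i := Finset.sum_nonneg hA
  have hSB : 0 ≤ ∑ i ∈ J, B i := Finset.sum_nonneg hB
  rcases eq_or_lt_of_le hSA with hA0 | hApos
  · have hz : ∀ i ∈ J, A i = 0 := (Finset.sum_eq_zero_iff_of_nonneg hA).mp hA0.symm
    have hL : ∑ i ∈ J, (A i) ^ (1/p) * (B i) ^ (1 - 1/p) = 0 :=
      Finset.sum_eq_zero fun i hi => by rw [hz i hi, Real.zero_rpow hw1.ne', zero_mul]
    rw [hL, ← hA0, Real.zero_rpow hw1.ne', zero_mul]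
  · by_cases hw2' : 1 - 1/p = 0
    · have hp1 : 1/p = 1 := by linarith
      rw [hp1]
      simp [sub_self, Real.rpow_zero, Real.rpow_one]
    · have hw2p : 0 < 1 - 1/p := lt_of_le_of_ne hw2 (Ne.symm hw2')
      rcases eq_or_lt_of_le hSB with hB0 | hBpos
      · have hz : ∀ i ∈ J, B i = 0 := (Finset.sum_eq_zero_iff_of_nonneg hB).mp hB0.symm
        have hL : ∑ i ∈ J, (A i) ^ (1/p) * (B i) ^ (1 - 1/p) = 0 :=
          Finset.sum_eq_zero fun i hi => by rw [hz i hi, Real.zero_rpow hw2p.ne', mul_zero]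
        rw [hL, ← hB0, Real.zero_rpow hw2p.ne', mul_zero]
      · set X := ∑ i ∈ J, A i with hX
        set Y := ∑ i ∈ J, B i with hY
        have hXp : (0:ℝ) < X ^ (1/p) := Real.rpow_pos_of_pos hApos _
        have hYp : (0:ℝ) < Y ^ (1-1/p) := Real.rpow_pos_of_pos hBpos _
        have key : ∀ i ∈ J, A i ^ (1/p) * B i ^ (1-1/p)
            ≤ X ^ (1/p) * Y ^ (1-1/p) * ((1/p) * (A i / X) + (1 - 1/p) * (B i / Y)) := by
          intro i hi
          have h1 : (A i / X) ^ (1/p) * (B i / Y) ^ (1-1/p)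
              ≤ (1/p) * (A i / X) + (1 - 1/p) * (B i / Y) :=
            Real.geom_mean_le_arith_mean2_weighted hw1.le hw2
              (div_nonneg (hA i hi) hApos.le) (div_nonneg (hB i hi) hBpos.le) (by ring)
          have h2 : (A i / X) ^ (1/p) * (B i / Y) ^ (1-1/p)
              = A i ^ (1/p) * B i ^ (1-1/p) / (X ^ (1/p) * Y ^ (1-1/p)) := by
            rw [Real.div_rpow (hA i hi) hApos.le, Real.div_rpow (hB i hi) hBpos.le]
            ring
          rw [h2, div_le_iff₀ (by positivity)] at h1
          calc A i ^ (1/p) * B i ^ (1-1/p)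
              ≤ ((1/p) * (A i / X) + (1 - 1/p) * (B i / Y)) * (X ^ (1/p) * Y ^ (1-1/p)) := h1
            _ = X ^ (1/p) * Y ^ (1-1/p) * ((1/p) * (A i / X) + (1 - 1/p) * (B i / Y)) := by ring
        calc ∑ i ∈ J, (A i) ^ (1/p) * (B i) ^ (1 - 1/p)
            ≤ ∑ i ∈ J, X ^ (1/p) * Y ^ (1-1/p) * ((1/p) * (A i / X) + (1 - 1/p) * (B i / Y)) :=
              Finset.sum_le_sum key
          _ = X ^ (1/p) * Y ^ (1-1/p) * ((1/p) * (X / X) + (1 - 1/p) * (Y / Y)) := by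
              rw [← Finset.mul_sum]
              congr 1
              rw [Finset.sum_add_distrib, ← Finset.mul_sum, ← Finset.mul_sum,
                ← Finset.sum_div, ← Finset.sum_div]
          _ = X ^ (1/p) * Y ^ (1-1/p) := by
              rw [div_self hApos.ne', div_self hBpos.ne']; ring

theorem aux_parseval {V : Type*} [Fintype V] [DecidableEq V] (n : ℕ) (hn : Fintype.card V = n)
    (hn0 : 0 < n) (f : Fin n → V → ℝ)
    (hortho : ∀ i j, (1 / (n : ℝ)) * ∑ u, f i u * f j u = if i = j then 1 else 0) :
    ∀ x z : V → ℝ, (∑ i, (∑ u, x u * f i u) * (∑ u, z u * f i u)) = n * ∑ u, x u * z u := by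
  have hnR : ((n:ℝ)) ≠ 0 := Nat.cast_ne_zero.mpr hn0.ne'
  let σ : Fin n ≃ V := (Fintype.equivFinOfCardEq hn).symm
  let F : Matrix (Fin n) (Fin n) ℝ := Matrix.of fun i j => f i (σ j)
  have h1 : F * F.transpose = (n:ℝ) • 1 := by
    ext i j
    have h := hortho i j
    have hsum : ∑ k : Fin n, f i (σ k) * f j (σ k) = ∑ u, f i u * f j u :=
      σ.sum_comp (fun u => f i u * f j u)
    have h2 : ∑ u, f i u * f j u = (n:ℝ) * (if i = j then 1 else 0) := by
      rw [← h]; field_simp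
    simp only [Matrix.mul_apply, Matrix.transpose_apply, Matrix.of_apply, Matrix.smul_apply,
      Matrix.one_apply, smul_eq_mul, F]
    rw [hsum, h2]
  have h2 : F.transpose * F = (n:ℝ) • 1 := by
    have hinv : (((n:ℝ)⁻¹) • F) * F.transpose = 1 := by
      rw [Matrix.smul_mul, h1, smul_smul, inv_mul_cancel₀ hnR, one_smul]
    have hcomm := mul_eq_one_comm.mp hinv
    rw [Matrix.mul_smul] at hcomm
    calc F.transpose * F = (n:ℝ) • (((n:ℝ)⁻¹) • (F.transpose * F)) := by
          rw [smul_smul, mul_inv_cancel₀ hnR, one_smul]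
      _ = (n:ℝ) • 1 := by rw [hcomm]
  have key : ∀ u v : V, (∑ i, f i u * f i v) = if u = v then (n:ℝ) else 0 := by
    intro u v
    have h3 : (F.transpose * F) (σ.symm u) (σ.symm v)
        = ((n:ℝ) • (1 : Matrix (Fin n) (Fin n) ℝ)) (σ.symm u) (σ.symm v) := by rw [h2]
    simp only [Matrix.mul_apply, Matrix.transpose_apply, Matrix.of_apply, Matrix.smul_apply,
      Matrix.one_apply, smul_eq_mul, Equiv.apply_symm_apply, F] at h3
    rw [h3]
    by_cases huv : u = v
    · simp [huv]
    · rw [if_neg (fun hc => huv (σ.symm.injective hc)), if_neg huv, mul_zero]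
  intro x z
  calc (∑ i, (∑ u, x u * f i u) * (∑ u, z u * f i u))
      = ∑ i, ∑ u, ∑ v, (x u * f i u) * (z v * f i v) := by
        refine Finset.sum_congr rfl fun i _ => ?_
        rw [Finset.sum_mul_sum]
    _ = ∑ u, ∑ v, x u * z v * ∑ i, f i u * f i v := by
        rw [Finset.sum_comm]
        refine Finset.sum_congr rfl fun u _ => ?_
        rw [Finset.sum_comm]
        refine Finset.sum_congr rfl fun v _ => ?_
        rw [Finset.mul_sum]
        refine Finset.sum_congr rfl fun i _ => by ring
    _ = ∑ u, x u * z u * n := by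
        refine Finset.sum_congr rfl fun u _ => ?_
        have hterm : ∀ v, x u * z v * (∑ i, f i u * f i v)
            = if u = v then x u * z v * n else 0 := by
          intro v
          rw [key u v]
          split_ifs <;> simp
        rw [Finset.sum_congr rfl (fun v _ => hterm v), Finset.sum_ite_eq]
        simp
    _ = n * ∑ u, x u * z u := by
        rw [Finset.mul_sum]
        exact Finset.sum_congr rfl fun u _ => by ring

theorem aux_alg (dR nR s t Sg M E : ℝ) (hd : 0 < dR) (hnn : 0 < nR) (hs : 0 < s) (ht : 0 < t)
    (hnt : nR = s + t) (hSP : Sg = nR * (M / dR)) (hE : E = dR * s - M) :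
    E / (dR / nR * s * t) - 1 = (s ^ 2 - Sg) / (s * t) := by
  subst hE hSP hnt
  field_simp
  ring

theorem aux_eqA (L s t p : ℝ) (hL0 : 0 ≤ L) (hs0 : 0 < s) (ht0 : 0 < t) (hp0 : 0 < p) :
    (L * s ^ 2) ^ (1/p) * (s * t) ^ (1 - 1/p) = L ^ (1/p) * (s / t) ^ (1/p) * (s * t) := by
  rw [Real.mul_rpow hL0 (sq_nonneg s), Real.mul_rpow hs0.le ht0.le,
    Real.div_rpow hs0.le ht0.le]
  have h1 : (s ^ 2) ^ ((1:ℝ)/p) = s ^ ((1:ℝ)/p) * s ^ ((1:ℝ)/p) := by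
    rw [sq, Real.mul_rpow hs0.le hs0.le]
  have h2 : s ^ (1 - 1/p) = s / s ^ ((1:ℝ)/p) := by
    rw [Real.rpow_sub hs0, Real.rpow_one]
  have h3 : t ^ (1 - 1/p) = t / t ^ ((1:ℝ)/p) := by
    rw [Real.rpow_sub ht0, Real.rpow_one]
  rw [h1, h2, h3]
  have hsr : s ^ ((1:ℝ)/p) ≠ 0 := (Real.rpow_pos_of_pos hs0 _).ne'
  have htr : t ^ ((1:ℝ)/p) ≠ 0 := (Real.rpow_pos_of_pos ht0 _).ne'
  field_simp

set_option maxHeartbeats 2000000 in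
theorem aux_main {V : Type*} [Fintype V] [DecidableEq V] (n d : ℕ)
    (hn : Fintype.card V = n) (hn0 : 0 < n) (hd : 0 < d)
    (e : V → V → ℕ) (hsymm : ∀ u v, e u v = e v u) (hreg : ∀ u, ∑ v, e u v = d)
    (p : ℝ) (hp : 1 ≤ p)
    (lam : Fin n → ℝ) (f : Fin n → V → ℝ)
    (hlam0 : lam ⟨0, hn0⟩ = 1)
    (heig : ∀ i, (Matrix.of fun u v : V => (e u v : ℝ) / d).mulVec (f i) = lam i • f i)
    (hortho : ∀ i j, (1 / (n : ℝ)) * ∑ u, f i u * f j u = if i = j then 1 else 0)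
    (hbound : ∀ i u, |f i u| ≤ 1)
    (S : Finset V) (hS : S.Nonempty) (hS' : S ≠ Finset.univ)
    (hhalf : (S.card : ℝ) ≤ (n : ℝ) - S.card) :
    |(∑ u ∈ S, ∑ v ∈ Sᶜ, (e u v : ℝ)) / (((d : ℝ) / n) * S.card * ((n : ℝ) - S.card)) - 1|
      ≤ (∑ i ∈ Finset.univ.erase (⟨0, hn0⟩ : Fin n), |lam i| ^ p) ^ (1 / p) *
        (((S.card : ℝ) ^ (1 / (p + 1)) * ((n : ℝ) - S.card) ^ (p / (p + 1)) +
          (S.card : ℝ) ^ (p / (p + 1)) * ((n : ℝ) - S.card) ^ (1 / (p + 1))) / n)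
          ^ ((p + 1) / p) := by
  have hp0 : 0 < p := lt_of_lt_of_le one_pos hp
  have hnR : (0:ℝ) < n := by exact_mod_cast hn0
  have hdR : (0:ℝ) < d := by exact_mod_cast hd
  set s' : ℝ := (S.card : ℝ) with hs'
  set t' : ℝ := (n : ℝ) - s' with ht'
  have hs0 : (0:ℝ) < s' := by rw [hs']; exact_mod_cast hS.card_pos
  have hcardlt : S.card < n := by
    have h1 : S ⊂ Finset.univ := lt_of_le_of_ne (Finset.subset_univ S) hS'
    have h2 := Finset.card_lt_card h1
    rwa [Finset.card_univ, hn] at h2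
  have ht0 : (0:ℝ) < t' := by
    rw [ht', hs']
    have : (S.card:ℝ) < n := by exact_mod_cast hcardlt
    linarith
  have hnst : (n:ℝ) = s' + t' := by rw [ht']; ring
  have bil := aux_parseval n hn hn0 f hortho
  classical
  set ind : V → ℝ := fun u => if u ∈ S then 1 else 0 with hind_def
  have hind : ∀ g : V → ℝ, (∑ u, ind u * g u) = ∑ u ∈ S, g u := by
    intro g
    simp only [hind_def, ite_mul, one_mul, zero_mul]
    rw [Finset.sum_ite_mem, Finset.univ_inter]
  have hind1 : (∑ u, ind u * ind u) = s' := by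
    rw [hind ind]
    rw [Finset.sum_congr rfl (fun u hu => if_pos hu)]
    simp [hs']
  set α : Fin n → ℝ := fun i => ∑ u ∈ S, f i u with hα
  set c : Fin n → ℝ := fun i => ∑ u, f i u with hc
  have hαdef : ∀ i, α i = ∑ u ∈ S, f i u := fun i => rfl
  have hcdef : ∀ i, c i = ∑ u, f i u := fun i => rfl
  have hindS : (∑ u ∈ S, ind u) = s' := by
    rw [Finset.sum_congr rfl (fun u hu => show ind u = 1 by simp [hind_def, hu])]
    simp [hs']
  -- Parseval identities
  have P1 : (∑ i, α i ^ 2) = n * s' := by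
    have h := bil ind ind
    simp only [hind] at h
    rw [hindS] at h
    rw [← h]
    exact Finset.sum_congr rfl fun i _ => by rw [hαdef, sq]
  have hindfull : (∑ u : V, ind u) = s' := by
    simp only [hind_def]
    rw [Finset.sum_ite_mem, Finset.univ_inter]
    simp [hs']
  have P2 : (∑ i, α i * c i) = n * s' := by
    have h := bil ind (fun _ => 1)
    simp only [hind, one_mul, mul_one] at h
    rw [hindfull] at h
    rw [← h]
  have P3 : (∑ i, c i ^ 2) = n * n := by
    have h := bil (fun _ => 1) (fun _ => 1)
    simp only [one_mul, mul_one] at h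
    have h2 : (∑ _x : V, (1:ℝ)) = n := by simp [hn]
    rw [h2] at h
    rw [← h]
    exact Finset.sum_congr rfl fun i _ => by rw [hcdef, sq]
  -- eigen equation pointwise
  have heig' : ∀ i v, (∑ u, (e v u : ℝ)/d * f i u) = lam i * f i v := by
    intro i v
    have h := congrFun (heig i) v
    simpa [Matrix.mulVec, dotProduct] using h
  set z : V → ℝ := fun u => ∑ v ∈ S, (e v u : ℝ)/d with hzdef
  have hz : ∀ i, (∑ u, z u * f i u) = lam i * α i := by
    intro i
    calc (∑ u, z u * f i u) = ∑ u, ∑ v ∈ S, (e v u : ℝ)/d * f i u := by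
          refine Finset.sum_congr rfl fun u _ => ?_
          rw [show z u = ∑ v ∈ S, (e v u : ℝ)/d from rfl, Finset.sum_mul]
      _ = ∑ v ∈ S, ∑ u, (e v u : ℝ)/d * f i u := Finset.sum_comm
      _ = ∑ v ∈ S, lam i * f i v := Finset.sum_congr rfl fun v _ => heig' i v
      _ = lam i * α i := by rw [hαdef, Finset.mul_sum]
  set M : ℝ := ∑ u ∈ S, ∑ v ∈ S, (e u v : ℝ) with hMdef
  have hzS : (∑ u ∈ S, z u) = M / d := by
    calc (∑ u ∈ S, z u) = ∑ u ∈ S, (∑ v ∈ S, (e v u : ℝ))/d := by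
          refine Finset.sum_congr rfl fun u _ => ?_
          rw [show z u = ∑ v ∈ S, (e v u : ℝ)/d from rfl, Finset.sum_div]
      _ = (∑ u ∈ S, ∑ v ∈ S, (e v u : ℝ))/d := by rw [Finset.sum_div]
      _ = M/d := by rw [hMdef]; congr 1; exact Finset.sum_comm
  have SP : (∑ i, lam i * α i ^ 2) = n * (M / d) := by
    have h := bil ind z
    simp only [hind, hz] at h
    rw [hzS] at h
    rw [← h]
    refine Finset.sum_congr rfl fun i _ => ?_
    rw [hαdef, sq]
    ring
  have hE : (∑ u ∈ S, ∑ v ∈ Sᶜ, (e u v : ℝ)) = d * s' - M := by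
    have hrow : ∀ u, (∑ v ∈ Sᶜ, (e u v : ℝ)) = d - ∑ v ∈ S, (e u v : ℝ) := by
      intro u
      have h1 : (∑ v ∈ S, (e u v:ℝ)) + ∑ v ∈ Sᶜ, (e u v:ℝ) = ∑ v, (e u v : ℝ) :=
        S.sum_add_sum_compl _
      have h2 : (∑ v, (e u v : ℝ)) = d := by
        rw [← Nat.cast_sum, hreg u]
      linarith
    rw [Finset.sum_congr rfl (fun u _ => hrow u), Finset.sum_sub_distrib, Finset.sum_const,
      ← hMdef]
    simp only [nsmul_eq_mul, hs']
    ring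
  -- the eigenvalue-1 part
  set I : Finset (Fin n) := Finset.univ.filter (fun i => lam i = 1) with hIdef
  have h0mem : (⟨0, hn0⟩ : Fin n) ∈ I := by
    rw [hIdef]; simp [hlam0]
  have hIcard1 : 1 ≤ I.card := Finset.card_pos.mpr ⟨_, h0mem⟩
  have hcol : ∀ u, (∑ v, (e v u : ℝ)/d) = 1 := by
    intro u
    rw [← Finset.sum_div]
    rw [Finset.sum_congr rfl (fun v _ => by rw [hsymm v u] : ∀ v ∈ Finset.univ, (e v u:ℝ) = e u v)]
    rw [← Nat.cast_sum, hreg u, div_self hdR.ne']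
  have hceig : ∀ i, lam i * c i = c i := by
    intro i
    calc lam i * c i = ∑ v, lam i * f i v := by rw [hcdef, Finset.mul_sum]
      _ = ∑ v, ∑ u, (e v u:ℝ)/d * f i u :=
          Finset.sum_congr rfl fun v _ => (heig' i v).symm
      _ = ∑ u, ∑ v, (e v u:ℝ)/d * f i u := Finset.sum_comm
      _ = ∑ u, (∑ v, (e v u:ℝ)/d) * f i u := by
          refine Finset.sum_congr rfl fun u _ => ?_
          rw [Finset.sum_mul]
      _ = ∑ u, f i u := by
          refine Finset.sum_congr rfl fun u _ => ?_
          rw [hcol u, one_mul]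
      _ = c i := rfl
  have hczero : ∀ i, i ∉ I → c i = 0 := by
    intro i hi
    have hne : lam i ≠ 1 := by
      intro h
      exact hi (by rw [hIdef]; simp [h])
    have h2 : (lam i - 1) * c i = 0 := by rw [sub_mul, hceig i, one_mul, sub_self]
    rcases mul_eq_zero.mp h2 with h | h
    · exact absurd (by linarith : lam i = 1) hne
    · exact h
  have hIc2 : (∑ i ∈ I, c i ^ 2) = n * n := by
    rw [Finset.sum_subset (Finset.subset_univ I)
      (fun i _ hi => by rw [hczero i hi]; ring)]
    exact P3
  have hIαc : (∑ i ∈ I, α i * c i) = n * s' := by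
    rw [Finset.sum_subset (Finset.subset_univ I)
      (fun i _ hi => by rw [hczero i hi, mul_zero])]
    exact P2
  set Δ : ℝ := (∑ i ∈ I, α i ^ 2) - s' ^ 2 with hΔdef
  set w : ℝ := ∑ i ∈ Iᶜ, α i ^ 2 with hwdef
  have hw0 : 0 ≤ w := Finset.sum_nonneg fun i _ => sq_nonneg _
  have hΔ0 : 0 ≤ Δ := by
    have hcs := Finset.sum_mul_sq_le_sq_mul_sq I α c
    rw [hIαc, hIc2] at hcs
    have h1 : s'^2 * (n*n) ≤ (∑ i ∈ I, α i ^ 2) * (n*n) := by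
      calc s'^2 * (n*n) = (↑n * s')^2 := by ring
        _ ≤ _ := hcs
    have h2 : s'^2 ≤ ∑ i ∈ I, α i ^ 2 :=
      le_of_mul_le_mul_right h1 (by positivity)
    rw [hΔdef]; linarith
  have habs : ∀ i, |α i| ≤ s' := by
    intro i
    rw [hαdef]
    calc |∑ u ∈ S, f i u| ≤ ∑ u ∈ S, |f i u| := Finset.abs_sum_le_sum_abs _ _
      _ ≤ ∑ u ∈ S, 1 := Finset.sum_le_sum fun u _ => hbound i u
      _ = s' := by simp [hs']
  have hb : ∀ i, α i ^ 2 ≤ s' ^ 2 := by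
    intro i
    have h1 := pow_le_pow_left₀ (abs_nonneg (α i)) (habs i) 2
    rwa [sq_abs] at h1
  have hΔk : Δ ≤ ((I.card : ℝ) - 1) * s' ^ 2 := by
    have hsum_le : (∑ i ∈ I, α i ^ 2) ≤ I.card * s'^2 := by
      calc (∑ i ∈ I, α i ^ 2) ≤ ∑ _i ∈ I, s'^2 := Finset.sum_le_sum fun i _ => hb i
        _ = I.card * s'^2 := by rw [Finset.sum_const, nsmul_eq_mul]
    rw [hΔdef]; linarith
  have hΔw : Δ + w = s' * t' := by
    have htot : (∑ i ∈ I, α i ^ 2) + ∑ i ∈ Iᶜ, α i ^ 2 = ∑ i, α i ^ 2 :=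
      I.sum_add_sum_compl _
    have h1 : Δ + w = ↑n * s' - s'^2 := by rw [hΔdef, hwdef]; rw [← htot] at P1; linarith
    rw [h1, ht']; ring
  -- split of the eigenvalue sum
  set L : ℝ := ∑ i ∈ Finset.univ.erase (⟨0, hn0⟩ : Fin n), |lam i| ^ p with hLdef
  set Λ : ℝ := ∑ i ∈ Iᶜ, |lam i| ^ p with hΛdef
  have hL0 : 0 ≤ L := Finset.sum_nonneg fun i _ => Real.rpow_nonneg (abs_nonneg _) _
  have hΛ0 : 0 ≤ Λ := Finset.sum_nonneg fun i _ => Real.rpow_nonneg (abs_nonneg _) _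
  have hLsplit : L = ((I.card : ℝ) - 1) + Λ := by
    rw [hLdef,
      ← Finset.sum_filter_add_sum_filter_not (Finset.univ.erase (⟨0, hn0⟩ : Fin n))
        (fun i => lam i = 1)]
    congr 1
    · have hfil : (Finset.univ.erase (⟨0, hn0⟩ : Fin n)).filter (fun i => lam i = 1)
          = I.erase ⟨0, hn0⟩ := by
        ext i
        rw [hIdef]
        simp only [Finset.mem_filter, Finset.mem_erase, Finset.mem_univ, true_and, and_true]
      rw [hfil]
      have hone : ∀ i ∈ I.erase (⟨0, hn0⟩ : Fin n), |lam i| ^ p = 1 := by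
        intro i hi
        have h1 : lam i = 1 := by
          have := (Finset.mem_erase.mp hi).2
          rw [hIdef] at this
          exact (Finset.mem_filter.mp this).2
        simp [h1]
      rw [Finset.sum_congr rfl hone, Finset.sum_const, Finset.card_erase_of_mem h0mem,
        nsmul_eq_mul, mul_one, Nat.cast_sub hIcard1, Nat.cast_one]
    · have hfil : (Finset.univ.erase (⟨0, hn0⟩ : Fin n)).filter (fun i => ¬ lam i = 1) = Iᶜ := by
        ext i
        rw [hIdef]
        simp only [Finset.mem_filter, Finset.mem_erase, Finset.mem_univ, true_and, and_true,
          Finset.mem_compl]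
        constructor
        · tauto
        · intro h
          exact ⟨fun h0 => h (h0 ▸ hlam0), h⟩
      rw [hfil]
  -- main estimate
  set Sg : ℝ := ∑ i, lam i * α i ^ 2 with hSgdef
  have hQ : |s'^2 - Sg| ≤ Δ + ∑ i ∈ Iᶜ, |lam i| * α i ^ 2 := by
    have hsplitSg : Sg = (∑ i ∈ I, α i ^ 2) + ∑ i ∈ Iᶜ, lam i * α i ^ 2 := by
      rw [hSgdef, ← I.sum_add_sum_compl (fun i => lam i * α i ^ 2)]
      congr 1
      refine Finset.sum_congr rfl fun i hi => ?_
      rw [hIdef] at hi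
      rw [(Finset.mem_filter.mp hi).2, one_mul]
    rw [show s'^2 - Sg = -(Δ + ∑ i ∈ Iᶜ, lam i * α i ^ 2) from by
      rw [hsplitSg, hΔdef]; ring, abs_neg]
    calc |Δ + ∑ i ∈ Iᶜ, lam i * α i ^ 2| ≤ |Δ| + |∑ i ∈ Iᶜ, lam i * α i ^ 2| := abs_add_le _ _
      _ ≤ Δ + ∑ i ∈ Iᶜ, |lam i| * α i ^ 2 := by
          apply add_le_add (le_of_eq (abs_of_nonneg hΔ0))
          refine le_trans (Finset.abs_sum_le_sum_abs _ _) (Finset.sum_le_sum fun i _ => ?_)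
          rw [abs_mul, abs_of_nonneg (sq_nonneg (α i))]
  have hHold : Δ + (∑ i ∈ Iᶜ, |lam i| * α i ^ 2)
      ≤ (L * s'^2) ^ (1/p) * (s' * t') ^ (1 - 1/p) := by
    have hone : (1:ℝ)/p + (1 - 1/p) = 1 := by ring
    have hA1 : ∀ i ∈ Iᶜ, |lam i| * α i ^ 2
        = (|lam i| ^ p * α i ^ 2) ^ (1/p) * (α i ^ 2) ^ (1 - 1/p) := by
      intro i _
      rw [Real.mul_rpow (Real.rpow_nonneg (abs_nonneg _) _) (sq_nonneg _),
        ← Real.rpow_mul (abs_nonneg _), mul_one_div, div_self hp0.ne', Real.rpow_one,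
        mul_assoc, ← Real.rpow_add' (sq_nonneg _) (by rw [hone]; norm_num), hone,
        Real.rpow_one]
    have step1 : Δ ≤ (((I.card : ℝ) - 1) * s'^2) ^ (1/p) * Δ ^ (1 - 1/p) := by
      have hΔeq : Δ = Δ ^ ((1:ℝ)/p) * Δ ^ (1 - 1/p) := by
        rw [← Real.rpow_add' hΔ0 (by rw [hone]; norm_num), hone, Real.rpow_one]
      nth_rewrite 1 [hΔeq]
      apply mul_le_mul_of_nonneg_right _ (Real.rpow_nonneg hΔ0 _)
      exact Real.rpow_le_rpow hΔ0 hΔk (by positivity)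
    have step2 : (∑ i ∈ Iᶜ, |lam i| * α i ^ 2) ≤ (Λ * s'^2) ^ (1/p) * w ^ (1 - 1/p) := by
      calc (∑ i ∈ Iᶜ, |lam i| * α i ^ 2)
          = ∑ i ∈ Iᶜ, (|lam i| ^ p * α i ^ 2) ^ (1/p) * (α i ^ 2) ^ (1 - 1/p) :=
            Finset.sum_congr rfl hA1
        _ ≤ (∑ i ∈ Iᶜ, |lam i| ^ p * α i ^ 2) ^ (1/p) * (∑ i ∈ Iᶜ, α i ^ 2) ^ (1 - 1/p) :=
            aux_hoelder_sum p hp Iᶜ _ _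
              (fun i _ => mul_nonneg (Real.rpow_nonneg (abs_nonneg _) _) (sq_nonneg _))
              (fun i _ => sq_nonneg _)
        _ ≤ (Λ * s'^2) ^ (1/p) * w ^ (1 - 1/p) := by
            rw [← hwdef]
            apply mul_le_mul_of_nonneg_right _ (Real.rpow_nonneg hw0 _)
            apply Real.rpow_le_rpow
              (Finset.sum_nonneg fun i _ =>
                mul_nonneg (Real.rpow_nonneg (abs_nonneg _) _) (sq_nonneg _)) _ (by positivity)
            rw [hΛdef, Finset.sum_mul]
            exact Finset.sum_le_sum fun i _ =>
              mul_le_mul_of_nonneg_left (hb i) (Real.rpow_nonneg (abs_nonneg _) _)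
    have step3 : (((I.card : ℝ) - 1) * s'^2) ^ (1/p) * Δ ^ (1 - 1/p)
        + (Λ * s'^2) ^ (1/p) * w ^ (1 - 1/p)
        ≤ ((((I.card : ℝ) - 1) * s'^2) + Λ * s'^2) ^ (1/p) * (Δ + w) ^ (1 - 1/p) := by
      have hk1 : (0:ℝ) ≤ (I.card : ℝ) - 1 := by
        have : (1:ℝ) ≤ (I.card : ℝ) := by exact_mod_cast hIcard1
        linarith
      have h2b := aux_hoelder_sum p hp (Finset.univ : Finset Bool)
        (fun b => if b then ((I.card : ℝ) - 1) * s'^2 else Λ * s'^2)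
        (fun b => if b then Δ else w)
        (fun b _ => by cases b <;> simp only [Bool.false_eq_true, ↓reduceIte] <;> nlinarith [mul_nonneg hk1 (sq_nonneg s'), mul_nonneg hΛ0 (sq_nonneg s')])
        (fun b _ => by cases b <;> simp [hΔ0, hw0])
      simpa [Fintype.sum_bool] using h2b
    calc Δ + (∑ i ∈ Iᶜ, |lam i| * α i ^ 2)
        ≤ (((I.card : ℝ) - 1) * s'^2) ^ (1/p) * Δ ^ (1 - 1/p)
          + (Λ * s'^2) ^ (1/p) * w ^ (1 - 1/p) := add_le_add step1 step2
      _ ≤ ((((I.card : ℝ) - 1) * s'^2) + Λ * s'^2) ^ (1/p) * (Δ + w) ^ (1 - 1/p) := step3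
      _ = (L * s'^2) ^ (1/p) * (s' * t') ^ (1 - 1/p) := by
          rw [hΔw, hLsplit]; ring_nf
  -- rewrite the LHS
  have hLHS : (∑ u ∈ S, ∑ v ∈ Sᶜ, (e u v : ℝ)) / ((d:ℝ)/(n:ℝ) * s' * t') - 1
      = (s'^2 - Sg)/(s' * t') :=
    aux_alg (d:ℝ) (n:ℝ) s' t' Sg M _ hdR hnR hs0 ht0 hnst SP hE
  rw [hLHS, abs_div, abs_of_pos (mul_pos hs0 ht0)]
  have eqA : (L * s'^2) ^ (1/p) * (s' * t') ^ (1 - 1/p)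
      = L ^ (1/p) * (s'/t') ^ (1/p) * (s' * t') := aux_eqA L s' t' p hL0 hs0 ht0 hp0
  have main1 : |s'^2 - Sg| / (s' * t') ≤ L ^ (1/p) * (s'/t') ^ (1/p) := by
    rw [div_le_iff₀ (mul_pos hs0 ht0)]
    calc |s'^2 - Sg| ≤ (L * s'^2) ^ (1/p) * (s' * t') ^ (1 - 1/p) := le_trans hQ hHold
      _ = L ^ (1/p) * (s'/t') ^ (1/p) * (s' * t') := eqA
  have hp1 : (0:ℝ) < p + 1 := by linarith
  have hA : t' ^ (p/(p+1)) * t' ^ (1/(p+1)) = t' := by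
    rw [← Real.rpow_add ht0, ← add_div, div_self hp1.ne', Real.rpow_one]
  have hB : t' ^ (1/(p+1)) * t' ^ (1/(p+1)) = t' ^ (2/(p+1)) := by
    rw [← Real.rpow_add ht0]
    congr 1
    ring
  have hC : s' ^ (1/(p+1)) * s' = s' ^ (p/(p+1)) * s' ^ (2/(p+1)) := by
    have e1 := Real.rpow_add hs0 (1/(p+1)) 1
    rw [Real.rpow_one] at e1
    have e2 := Real.rpow_add hs0 (p/(p+1)) (2/(p+1))
    rw [← e1, ← e2]
    congr 1
    field_simp
    ring
  have hD : s' ^ ((2:ℝ)/(p+1)) ≤ t' ^ ((2:ℝ)/(p+1)) :=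
    Real.rpow_le_rpow hs0.le hhalf (by positivity)
  have key2 : (s'/t') ^ (1/(p+1)) * t' ^ (1/(p+1)) = s' ^ (1/(p+1)) := by
    rw [Real.div_rpow hs0.le ht0.le, div_mul_cancel₀]
    exact (Real.rpow_pos_of_pos ht0 _).ne'
  have step1 : (s'/t') ^ (1/(p+1))
      ≤ (s' ^ (1/(p+1)) * t' ^ (p/(p+1)) + s' ^ (p/(p+1)) * t' ^ (1/(p+1))) / n := by
    rw [le_div_iff₀ hnR]
    apply le_of_mul_le_mul_right _ (Real.rpow_pos_of_pos ht0 (1/(p+1)))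
    rw [show (s'/t') ^ (1/(p+1)) * (n:ℝ) * t' ^ (1/(p+1))
        = (s'/t') ^ (1/(p+1)) * t' ^ (1/(p+1)) * (n:ℝ) from by ring, key2]
    calc s' ^ (1/(p+1)) * (n:ℝ) = s' ^ (1/(p+1)) * s' + s' ^ (1/(p+1)) * t' := by
          rw [hnst]; ring
      _ ≤ s' ^ (p/(p+1)) * t' ^ (2/(p+1)) + s' ^ (1/(p+1)) * t' := by
          apply add_le_add_left
          rw [hC]
          exact mul_le_mul_of_nonneg_left hD (Real.rpow_nonneg hs0.le _)
      _ = (s' ^ (1/(p+1)) * t' ^ (p/(p+1)) + s' ^ (p/(p+1)) * t' ^ (1/(p+1))) * t' ^ (1/(p+1)) := by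
          rw [show (s' ^ (1/(p+1)) * t' ^ (p/(p+1)) + s' ^ (p/(p+1)) * t' ^ (1/(p+1)))
              * t' ^ (1/(p+1))
            = s' ^ (1/(p+1)) * (t' ^ (p/(p+1)) * t' ^ (1/(p+1)))
              + s' ^ (p/(p+1)) * (t' ^ (1/(p+1)) * t' ^ (1/(p+1))) from by ring, hA, hB]
          ring
  have step2 : (s'/t') ^ ((1:ℝ)/p) = ((s'/t') ^ (1/(p+1))) ^ ((p+1)/p) := by
    rw [← Real.rpow_mul (div_nonneg hs0.le ht0.le)]
    congr 1
    field_simp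
  have hfin : (s'/t') ^ ((1:ℝ)/p)
      ≤ ((s' ^ (1/(p+1)) * t' ^ (p/(p+1)) + s' ^ (p/(p+1)) * t' ^ (1/(p+1))) / n) ^ ((p+1)/p) := by
    rw [step2]
    exact Real.rpow_le_rpow (Real.rpow_nonneg (div_nonneg hs0.le ht0.le) _) step1 (by positivity)
  calc |s'^2 - Sg| / (s' * t') ≤ L ^ (1/p) * (s'/t') ^ (1/p) := main1
    _ ≤ L ^ (1/p) * ((s' ^ (1/(p+1)) * t' ^ (p/(p+1)) + s' ^ (p/(p+1)) * t' ^ (1/(p+1))) / n)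
          ^ ((p+1)/p) := mul_le_mul_of_nonneg_left hfin (Real.rpow_nonneg hL0 _)




theorem stmt12 {V : Type*} [Fintype V] [DecidableEq V] (n d : ℕ)
    (hn : Fintype.card V = n) (hn0 : 0 < n) (hd : 0 < d)
    (e : V → V → ℕ) (hsymm : ∀ u v, e u v = e v u) (hreg : ∀ u, ∑ v, e u v = d)
    (p : ℝ) (hp : 1 ≤ p)
    (lam : Fin n → ℝ) (f : Fin n → V → ℝ)
    (hanti : Antitone lam) (hlam0 : lam ⟨0, hn0⟩ = 1)
    (heig : ∀ i, (Matrix.of fun u v : V => (e u v : ℝ) / d).mulVec (f i) = lam i • f i)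
    (hortho : ∀ i j, (1 / (n : ℝ)) * ∑ u, f i u * f j u = if i = j then 1 else 0)
    (hbound : ∀ i u, |f i u| ≤ 1)
    (S : Finset V) (hS : S.Nonempty) (hS' : S ≠ Finset.univ) :
    |(∑ u ∈ S, ∑ v ∈ Sᶜ, (e u v : ℝ)) / (((d : ℝ) / n) * S.card * ((n : ℝ) - S.card)) - 1|
      ≤ (∑ i ∈ Finset.univ.erase (⟨0, hn0⟩ : Fin n), |lam i| ^ p) ^ (1 / p) *
        (((S.card : ℝ) ^ (1 / (p + 1)) * ((n : ℝ) - S.card) ^ (p / (p + 1)) +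
          (S.card : ℝ) ^ (p / (p + 1)) * ((n : ℝ) - S.card) ^ (1 / (p + 1))) / n)
          ^ ((p + 1) / p) := by
  by_cases hhalf : (S.card : ℝ) ≤ (n : ℝ) - S.card
  · exact aux_main n d hn hn0 hd e hsymm hreg p hp lam f hlam0 heig hortho hbound S hS hS' hhalf
  · push_neg at hhalf
    have hSc : Sᶜ.Nonempty := by
      obtain ⟨x, _, hxS⟩ :=
        Finset.exists_of_ssubset (lt_of_le_of_ne (Finset.subset_univ S) hS')
      exact ⟨x, Finset.mem_compl.mpr hxS⟩
    have hSc' : Sᶜ ≠ Finset.univ := by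
      intro h
      rw [Finset.compl_eq_univ_iff] at h
      exact hS.ne_empty h
    have hcards : S.card ≤ n := by
      rw [← hn]; exact Finset.card_le_univ S
    have hcc : ((Sᶜ.card : ℕ) : ℝ) = (n:ℝ) - S.card := by
      rw [Finset.card_compl, hn, Nat.cast_sub hcards]
    have hhalf' : ((Sᶜ.card : ℕ) : ℝ) ≤ (n:ℝ) - Sᶜ.card := by
      rw [hcc]; linarith
    have h := aux_main n d hn hn0 hd e hsymm hreg p hp lam f hlam0 heig hortho hbound
      Sᶜ hSc hSc' hhalf'
    rw [compl_compl] at h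
    have hsum : (∑ u ∈ Sᶜ, ∑ v ∈ S, (e u v : ℝ)) = ∑ u ∈ S, ∑ v ∈ Sᶜ, (e u v : ℝ) := by
      rw [Finset.sum_comm]
      exact Finset.sum_congr rfl fun v _ => Finset.sum_congr rfl fun u _ => by rw [hsymm]
    rw [hsum, hcc] at h
    rw [show (n:ℝ) - ((n:ℝ) - (S.card:ℝ)) = (S.card:ℝ) from by ring] at h
    rw [show (d:ℝ)/(n:ℝ) * ((n:ℝ) - (S.card:ℝ)) * (S.card:ℝ)
        = (d:ℝ)/(n:ℝ) * (S.card:ℝ) * ((n:ℝ) - (S.card:ℝ)) from by ring] at h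
    rw [show ((n:ℝ) - (S.card:ℝ)) ^ (1/(p+1)) * (S.card:ℝ) ^ (p/(p+1))
          + ((n:ℝ) - (S.card:ℝ)) ^ (p/(p+1)) * (S.card:ℝ) ^ (1/(p+1))
        = (S.card:ℝ) ^ (1/(p+1)) * ((n:ℝ) - (S.card:ℝ)) ^ (p/(p+1))
          + (S.card:ℝ) ^ (p/(p+1)) * ((n:ℝ) - (S.card:ℝ)) ^ (1/(p+1)) from by ring] at h
    exact h
end
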